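/- arXiv:0805.2043 — 4 statements merged into one kernel-verified Lean document; each statement's English description precedes it below -/
import Mathlib

section
/- Let X be a Banach space and Y a closed subspace of X such that the quotient X/Y has the Schur property. If Y is non-universal (i.e. Y contains no isomorphic copy of C(2^ℕ)), then X is non-universal. -/
open Filter Topology MeasureTheory

noncomputable section

/-! ### The Cantor set and the space `C(2^ℕ)` -/

/-- The Cantor set `2^ℕ`. -/
abbrev CantorSet : Type := ℕ → Bool

/-- The Banach space `C(2^ℕ)` of continuous real-valued functions on the Cantor set. -/
abbrev CantorC : Type := C(CantorSet, ℝ)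

/-! ### The standard Borel space `SB` of separable Banach spaces -/

/-- `SB`: the set of closed linear subspaces of `C(2^ℕ)`. -/
def SB : Type := {Y : Submodule ℝ CantorC // IsClosed (Y : Set CantorC)}

/-- The Effros-Borel σ-algebra on `SB`, generated by the sets
`{Y : Y ∩ U ≠ ∅}` for `U` open in `C(2^ℕ)`. -/
instance : MeasurableSpace SB :=
  MeasurableSpace.generateFrom
    {A : Set SB | ∃ U : Set CantorC, IsOpen U ∧ A = {Y : SB | ((Y.1 : Set CantorC) ∩ U).Nonempty}}

/-- A subset of a standard Borel space is analytic if it is the image of a Borel map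
from the Baire space `ℕ^ℕ`. -/
def IsAnalyticIn {α : Type*} [MeasurableSpace α] (A : Set α) : Prop :=
  ∃ f : (ℕ → ℕ) → α, Measurable f ∧ A = Set.range f

/-! ### Embeddings, isomorphisms, universality -/

/-- `X` embeds isomorphically into `Y`: there is a bounded linear map which is
bounded below, i.e. an isomorphism onto its range. -/
def Embeds (X Y : Type*) [SeminormedAddCommGroup X] [NormedSpace ℝ X]
    [SeminormedAddCommGroup Y] [NormedSpace ℝ Y] : Prop :=
  ∃ (T : X →L[ℝ] Y) (c : ℝ), 0 < c ∧ ∀ x : X, c * ‖x‖ ≤ ‖T x‖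

/-- `X` embeds isometrically into `Y` (i.e. `Y` contains an isometric copy of `X`). -/
def EmbedsIsometrically (X Y : Type*) [SeminormedAddCommGroup X] [NormedSpace ℝ X]
    [SeminormedAddCommGroup Y] [NormedSpace ℝ Y] : Prop :=
  Nonempty (X →ₗᵢ[ℝ] Y)

/-- `X` and `Y` are isomorphic Banach spaces (linearly homeomorphic). -/
def IsomorphicTo (X Y : Type*) [SeminormedAddCommGroup X] [NormedSpace ℝ X]
    [SeminormedAddCommGroup Y] [NormedSpace ℝ Y] : Prop :=
  Nonempty (X ≃L[ℝ] Y)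

/-- The class `NU ⊆ SB` of non-universal spaces: those `X ∈ SB` which do not contain
an isomorphic copy of `C(2^ℕ)` (equivalently, are not universal for all separable
Banach spaces). -/
def NU : Set SB := {Y : SB | ¬ Embeds CantorC Y.1}

/-- The class `NC_X ⊆ SB` of all `Y ∈ SB` containing no isomorphic copy of `X`. -/
def NCin (X : Type*) [SeminormedAddCommGroup X] [NormedSpace ℝ X] : Set SB :=
  {Y : SB | ¬ Embeds X Y.1}

/-! ### Schauder bases -/

/-- `x` is a Schauder basis of `E`: every vector has a unique representation as a
norm convergent series `Σ aₙ • xₙ`. -/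
def IsSchauderBasis {E : Type*} [SeminormedAddCommGroup E] [NormedSpace ℝ E]
    (x : ℕ → E) : Prop :=
  ∀ y : E, ∃! a : ℕ → ℝ,
    Tendsto (fun m => ∑ n ∈ Finset.range m, a n • x n) atTop (𝓝 y)

/-- `E` has a Schauder basis. -/
def HasSchauderBasis (E : Type*) [SeminormedAddCommGroup E] [NormedSpace ℝ E] : Prop :=
  ∃ x : ℕ → E, IsSchauderBasis x

/-- `x` is a monotone basis sequence: initial-segment projections have norm at most 1. -/
def IsMonotoneSeq {E : Type*} [SeminormedAddCommGroup E] [NormedSpace ℝ E]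
    (x : ℕ → E) : Prop :=
  ∀ (a : ℕ → ℝ) (k m : ℕ), k ≤ m →
    ‖∑ n ∈ Finset.range k, a n • x n‖ ≤ ‖∑ n ∈ Finset.range m, a n • x n‖

/-- `x` is a bi-monotone sequence: interval projections have norm at most 1. -/
def IsBimonotoneSeq {E : Type*} [SeminormedAddCommGroup E] [NormedSpace ℝ E]
    (x : ℕ → E) : Prop :=
  ∀ (a : ℕ → ℝ) (j k m : ℕ), j ≤ k → k ≤ m →
    ‖∑ n ∈ Finset.Ico j k, a n • x n‖ ≤ ‖∑ n ∈ Finset.range m, a n • x n‖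

/-- `x` is a Schauder basic sequence: it is a Schauder basis of its closed linear span. -/
def IsSchauderBasicSeq {E : Type*} [NormedAddCommGroup E] [NormedSpace ℝ E]
    (x : ℕ → E) : Prop :=
  ∀ y ∈ (Submodule.span ℝ (Set.range x)).topologicalClosure,
    ∃! a : ℕ → ℝ,
      Tendsto (fun m => ∑ n ∈ Finset.range m, a n • x n) atTop (𝓝 y)

/-! ### Trees, ordinal ranks and Bourgain's index -/

/-- A tree on `Λ`: a set of finite sequences closed under initial segments. -/
def IsTree {Λ : Type*} (T : Set (List Λ)) : Prop :=
  ∀ s t : List Λ, s <+: t → t ∈ T → s ∈ T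

/-- A pruned tree: every node has a proper extension in the tree. -/
def IsPruned {Λ : Type*} (T : Set (List Λ)) : Prop :=
  ∀ t ∈ T, ∃ a : Λ, t ++ [a] ∈ T

/-- `σ` is an infinite branch of `T`. -/
def IsBranch {Λ : Type*} (T : Set (List Λ)) (σ : ℕ → Λ) : Prop :=
  ∀ n : ℕ, (List.ofFn fun i : Fin n => σ i) ∈ T

/-- `T` is ill-founded: it has an infinite branch. -/
def TreeIllFounded {Λ : Type*} (T : Set (List Λ)) : Prop :=
  ∃ σ : ℕ → Λ, IsBranch T σ

/-- The derivative of a tree: its non-maximal nodes, i.e. nodes having a proper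
extension in the tree. -/
def treeDeriv {Λ : Type*} (T : Set (List Λ)) : Set (List Λ) :=
  {l | l ∈ T ∧ ∃ a : Λ, l ++ [a] ∈ T}

/-- The iterated derivatives `T^(ξ)` of a tree, defined by transfinite recursion. -/
def treeDerivIter {Λ : Type*} (T : Set (List Λ)) (ξ : Ordinal.{0}) : Set (List Λ) :=
  Ordinal.limitRecOn ξ T (fun _ S => treeDeriv S)
    (fun o _ ih => ⋂ (o' : Ordinal.{0}) (h : o' < o), ih o' h)

/-- The ordinal rank `o(T)` of a (well-founded) tree: the least `ξ` with `T^(ξ) = ∅`. -/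
def treeRank {Λ : Type*} (T : Set (List Λ)) : Ordinal.{0} :=
  sInf {ξ : Ordinal.{0} | treeDerivIter T ξ = ∅}

/-- The first uncountable ordinal `ω₁`. -/
def omega1 : Ordinal.{0} := (Cardinal.aleph 1).ord

/-- Bourgain's tree `T(Y, (e_n), δ)`: all finite sequences `(y_0, …, y_k)` in `Y`
which are `δ`-equivalent to `(e_0, …, e_k)`. -/
def bourgainTree {W : Type*} [SeminormedAddCommGroup W] [NormedSpace ℝ W] (e : ℕ → W)
    (δ : ℝ) (Y : Type*) [SeminormedAddCommGroup Y] [NormedSpace ℝ Y] : Set (List Y) :=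
  {l : List Y | ∀ a : ℕ → ℝ,
    δ * ‖∑ i ∈ Finset.range l.length, a i • e i‖ ≤
        ‖∑ i ∈ Finset.range l.length, a i • l.getD i 0‖ ∧
    ‖∑ i ∈ Finset.range l.length, a i • l.getD i 0‖ ≤
        δ⁻¹ * ‖∑ i ∈ Finset.range l.length, a i • e i‖}

open Classical in
/-- Bourgain's ordinal index of `Y` relative to a (normalized Schauder) basis `(e_n)`
of a space `W`: it equals `ω₁` if some tree `T(Y, (e_n), δ)` is ill-founded, and
otherwise `sup_{0 < δ ≤ 1} o(T(Y, (e_n), δ))`.  With `W = C(2^ℕ)` this is `φ_NU`,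
and with `W = Z` it is `φ_{NC_Z}`. -/
def bourgainIndex {W : Type*} [SeminormedAddCommGroup W] [NormedSpace ℝ W] (e : ℕ → W)
    (Y : Type*) [SeminormedAddCommGroup Y] [NormedSpace ℝ Y] : Ordinal.{0} :=
  if ∃ δ ∈ Set.Ioc (0:ℝ) 1, TreeIllFounded (bourgainTree e δ Y) then omega1
  else ⨆ δ : Set.Ioc (0:ℝ) 1, treeRank (bourgainTree e δ.1 Y)

/-! ### The Schur property and the Radon-Nikodym property -/

/-- `X` has the Schur property: weakly convergent sequences are norm convergent. -/
def HasSchurProperty (X : Type*) [SeminormedAddCommGroup X] [NormedSpace ℝ X] : Prop :=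
  ∀ (f : ℕ → X) (x : X),
    (∀ φ : X →L[ℝ] ℝ, Tendsto (fun n => φ (f n)) atTop (𝓝 (φ x))) →
    Tendsto f atTop (𝓝 x)

/-- `X` has the Radon-Nikodym property: on every finite measure space, every
`X`-valued vector measure of bounded variation which is absolutely continuous
with respect to the measure has a Bochner-integrable density. -/
def HasRNP (X : Type*) [NormedAddCommGroup X] [NormedSpace ℝ X] : Prop :=
  ∀ (Ω : Type) [MeasurableSpace Ω] (μ : Measure Ω), IsFiniteMeasure μ →
    ∀ τ : VectorMeasure Ω X,
      (∀ s : Set Ω, MeasurableSet s → μ s = 0 → τ s = 0) →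
      (∃ C : ℝ, ∀ P : Finset (Set Ω), (∀ s ∈ P, MeasurableSet s) →
        ((P : Set (Set Ω)).Pairwise fun s t => Disjoint s t) →
        ∑ s ∈ P, ‖τ s‖ ≤ C) →
      ∃ g : Ω → X, Integrable g μ ∧
        ∀ s : Set Ω, MeasurableSet s → τ s = ∫ x in s, g x ∂μ

/-! ### `𝓛_{∞,λ}`-spaces -/

/-- The Banach-Mazur distance from `G` to `ℓ∞^n` is at most `θ`, witnessed by an
isomorphism `e` with `‖e‖ ⬝ ‖e⁻¹‖ ≤ θ'` for every `θ' > θ`. -/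
def BMdistToLinftyLE (G : Type*) [SeminormedAddCommGroup G] [NormedSpace ℝ G]
    (n : ℕ) (θ : ℝ) : Prop :=
  ∀ θ' : ℝ, θ < θ' → ∃ e : G ≃L[ℝ] (Fin n → ℝ),
    ‖(e : G →L[ℝ] (Fin n → ℝ))‖ * ‖(e.symm : (Fin n → ℝ) →L[ℝ] G)‖ ≤ θ'

/-- `X` is an (infinite-dimensional) `𝓛_{∞,λ}`-space: every finite-dimensional subspace
`F` of `X` is contained in a finite-dimensional subspace `G` with `d(G, ℓ∞^(dim G)) ≤ λ`. -/
def IsLinftyLam (lam : ℝ) (X : Type*) [NormedAddCommGroup X] [NormedSpace ℝ X] : Prop :=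
  (¬ FiniteDimensional ℝ X) ∧
  ∀ F : Submodule ℝ X, FiniteDimensional ℝ F →
    ∃ G : Submodule ℝ X, F ≤ G ∧ FiniteDimensional ℝ G ∧
      BMdistToLinftyLE G (Module.finrank ℝ G) lam

/-- `X` is an `𝓛_{∞,λ+}`-space: it is an `𝓛_{∞,θ}`-space for every `θ > λ`. -/
def IsLinftyPlus (lam : ℝ) (X : Type*) [NormedAddCommGroup X] [NormedSpace ℝ X] : Prop :=
  ∀ θ : ℝ, lam < θ → IsLinftyLam θ X

/-! ### Minimal spaces and `ℓ₁` -/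

/-- The space `ℓ₁`. -/
abbrev EllOne : Type := lp (fun _ : ℕ => ℝ) 1

/-- `X` is a minimal Banach space: it is infinite-dimensional and embeds isomorphically
into every infinite-dimensional (closed) subspace of itself. -/
def IsMinimal (X : Type*) [NormedAddCommGroup X] [NormedSpace ℝ X] : Prop :=
  (¬ FiniteDimensional ℝ X) ∧
  ∀ Z : Submodule ℝ X, IsClosed (Z : Set X) → ¬ FiniteDimensional ℝ Z → Embeds X Z

end


noncomputable section NUAux
namespace NUAux

/-! ### Cantor set basics -/

lemma cantor_injective_seq : Function.Injective (fun (n : ℕ) => (fun i => decide (i = n) : CantorSet)) := by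
  intro n m h
  have := congrFun h n
  simpa using this.symm

lemma univ_infinite : (Set.univ : Set CantorSet).Infinite :=
  Set.infinite_of_injective_forall_mem cantor_injective_seq (fun _ => Set.mem_univ _)

/-- basic cylinder -/
def cyl (w : CantorSet) (m : ℕ) : Set CantorSet := {z | ∀ i, i < m → z i = w i}

lemma isClopen_cyl (w : CantorSet) (m : ℕ) : IsClopen (cyl w m) := by
  have : cyl w m = ⋂ i ∈ Finset.range m, {z : CantorSet | z i = w i} := by
    ext z; simp [cyl]
  rw [this]
  refine isClopen_biInter_finset (fun i _ => ?_)
  have : {z : CantorSet | z i = w i} = (fun z : CantorSet => z i) ⁻¹' {w i} := rfl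
  rw [this]
  exact (isClopen_discrete _).preimage (continuous_apply i)

lemma cyl_anti (w : CantorSet) {m m' : ℕ} (h : m ≤ m') : cyl w m' ⊆ cyl w m :=
  fun _ hz i hi => hz i (lt_of_lt_of_le hi h)

lemma mem_cyl_self (w : CantorSet) (m : ℕ) : w ∈ cyl w m := fun _ _ => rfl

lemma cyl_infinite (w : CantorSet) (m : ℕ) : (cyl w m).Infinite := by
  refine Set.infinite_of_injective_forall_mem
    (f := fun (n : ℕ) => (fun i => if i < m then w i else decide (i = m + n) : CantorSet)) ?_ ?_
  · intro n n' h
    have h1 := congrFun h (m + n)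
    simp only [if_neg (show ¬ m + n < m by omega), decide_eq_decide] at h1
    have h2 : m + n = m + n' := h1.mp trivial
    omega
  · intro n i hi
    simp [hi]

lemma exists_cyl_subset {V : Set CantorSet} (hV : IsOpen V) {z : CantorSet} (hz : z ∈ V) :
    ∃ m, cyl z m ⊆ V := by
  obtain ⟨I, u, hu, hsub⟩ := isOpen_pi_iff.1 hV z hz
  refine ⟨I.sup id + 1, ?_⟩
  intro z' hz'
  apply hsub
  intro i hi
  have hiI : i ∈ I := hi
  have : z' i = z i := hz' i (Nat.lt_succ_of_le (Finset.le_sup (f := id) hiI))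
  rw [this]
  exact (hu i hiI).2

/-! ### Indicator functions of clopen sets -/

open Classical in
/-- indicator of a clopen set, as a continuous map (junk value `0` otherwise) -/
def ind (B : Set CantorSet) : CantorC :=
  if hB : IsClopen B then
    ⟨fun z => if z ∈ B then (1 : ℝ) else 0, by
      have h1 : Continuous (B.boolIndicator) := (continuous_boolIndicator_iff_isClopen B).2 hB
      have : (fun z => if z ∈ B then (1 : ℝ) else 0)
          = (fun b : Bool => if b then (1:ℝ) else 0) ∘ B.boolIndicator := by
        funext z
        by_cases h : z ∈ B
        · simp [h, (B.mem_iff_boolIndicator z).1 h]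
        · simp [h, (B.notMem_iff_boolIndicator z).1 h]
      rw [this]
      exact (continuous_of_discreteTopology).comp h1⟩
  else 0

lemma ind_apply_mem {B : Set CantorSet} (hB : IsClopen B) {z : CantorSet} (hz : z ∈ B) :
    ind B z = 1 := by
  rw [ind, dif_pos hB]
  simp [hz]

lemma ind_apply_not_mem {B : Set CantorSet} (hB : IsClopen B) {z : CantorSet} (hz : z ∉ B) :
    ind B z = 0 := by
  rw [ind, dif_pos hB]
  simp [hz]

lemma norm_ind_le (B : Set CantorSet) : ‖ind B‖ ≤ 1 := by
  by_cases hB : IsClopen B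
  · rw [ContinuousMap.norm_le _ zero_le_one]
    intro z
    by_cases hz : z ∈ B
    · rw [ind_apply_mem hB hz]; simp
    · rw [ind_apply_not_mem hB hz]; simp
  · rw [ind, dif_neg hB]; simp

lemma ind_diff {B₁ B : Set CantorSet} (h₁ : IsClopen B₁) (hB : IsClopen B) (hsub : B₁ ⊆ B) :
    ind (B \ B₁) = ind B - ind B₁ := by
  ext z
  have hd : IsClopen (B \ B₁) := hB.diff h₁
  by_cases hz1 : z ∈ B₁
  · rw [ContinuousMap.sub_apply, ind_apply_not_mem hd (by simp [hz1]),
      ind_apply_mem hB (hsub hz1), ind_apply_mem h₁ hz1]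
    ring
  · by_cases hzB : z ∈ B
    · rw [ContinuousMap.sub_apply, ind_apply_mem hd ⟨hzB, hz1⟩, ind_apply_mem hB hzB,
        ind_apply_not_mem h₁ hz1]
      ring
    · rw [ContinuousMap.sub_apply, ind_apply_not_mem hd (fun h => hzB h.1),
        ind_apply_not_mem hB hzB, ind_apply_not_mem h₁ hz1]
      ring

section Comb

variable {ι : Type*} [Fintype ι] {B : ι → Set CantorSet}

lemma comb_apply_eq (hcl : ∀ i, IsClopen (B i))
    (hd : ∀ i j, i ≠ j → Disjoint (B i) (B j)) (c : ι → ℝ) {z : CantorSet} {i₀ : ι} (hz : z ∈ B i₀) :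
    (∑ i, c i • ind (B i)) z = c i₀ := by
  rw [ContinuousMap.sum_apply]
  rw [Finset.sum_eq_single_of_mem i₀ (Finset.mem_univ _)]
  · rw [ContinuousMap.smul_apply, ind_apply_mem (hcl i₀) hz, smul_eq_mul, mul_one]
  · intro j _ hj
    have hzj : z ∉ B j := fun h => (hd j i₀ hj).le_bot ⟨h, hz⟩
    rw [ContinuousMap.smul_apply, ind_apply_not_mem (hcl j) hzj, smul_eq_mul, mul_zero]

lemma comb_apply_eq_zero (hcl : ∀ i, IsClopen (B i)) (c : ι → ℝ) {z : CantorSet} (hz : ∀ i, z ∉ B i) :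
    (∑ i, c i • ind (B i)) z = 0 := by
  rw [ContinuousMap.sum_apply]
  refine Finset.sum_eq_zero (fun j _ => ?_)
  rw [ContinuousMap.smul_apply, ind_apply_not_mem (hcl j) (hz j), smul_eq_mul, mul_zero]

lemma norm_comb_le (hcl : ∀ i, IsClopen (B i))
    (hd : ∀ i j, i ≠ j → Disjoint (B i) (B j)) (c : ι → ℝ) {M : ℝ} (hM : 0 ≤ M) (hc : ∀ i, |c i| ≤ M) :
    ‖∑ i, c i • ind (B i)‖ ≤ M := by
  rw [ContinuousMap.norm_le _ hM]
  intro z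
  by_cases hex : ∃ i, z ∈ B i
  · obtain ⟨i₀, hi₀⟩ := hex
    rw [Real.norm_eq_abs, comb_apply_eq hcl hd c hi₀]
    exact hc i₀
  · push_neg at hex
    rw [Real.norm_eq_abs, comb_apply_eq_zero hcl c hex]
    simpa using hM

lemma le_norm_comb (hcl : ∀ i, IsClopen (B i))
    (hd : ∀ i j, i ≠ j → Disjoint (B i) (B j)) (c : ι → ℝ) {z : CantorSet} {i₀ : ι} (hz : z ∈ B i₀) :
    |c i₀| ≤ ‖∑ i, c i • ind (B i)‖ := by
  have h := (∑ i, c i • ind (B i)).norm_coe_le_norm z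
  rwa [comb_apply_eq hcl hd c hz, Real.norm_eq_abs] at h

end Comb

/-! ### disjointly supported sequences are weakly null -/

lemma tendsto_eval_zero (g : ℕ → CantorC) (hb : ∀ j, ‖g j‖ ≤ 1)
    (hdis : ∀ (z : CantorSet) (j k : ℕ), j ≠ k → g j z = 0 ∨ g k z = 0)
    (φ : CantorC →L[ℝ] ℝ) : Tendsto (fun j => φ (g j)) atTop (𝓝 0) := by
  have key : ∀ n : ℕ, ∑ j ∈ Finset.range n, |φ (g j)| ≤ ‖φ‖ := by
    intro n
    set e : ℕ → ℝ := fun j => if φ (g j) < 0 then -1 else 1 with he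
    set h : CantorC := ∑ j ∈ Finset.range n, e j • g j with hh
    have hφh : φ h = ∑ j ∈ Finset.range n, |φ (g j)| := by
      rw [hh, _root_.map_sum]
      refine Finset.sum_congr rfl (fun j _ => ?_)
      rw [_root_.map_smul]
      by_cases hj : φ (g j) < 0
      · simp [he, hj, abs_of_neg hj]
      · simp [he, hj, abs_of_nonneg (not_lt.1 hj)]
    have hhn : ‖h‖ ≤ 1 := by
      rw [ContinuousMap.norm_le _ zero_le_one]
      intro z
      have happ : h z = ∑ j ∈ Finset.range n, e j * g j z := by
        rw [hh, ContinuousMap.sum_apply]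
        exact Finset.sum_congr rfl (fun j _ => rfl)
      by_cases hex : ∃ j ∈ Finset.range n, g j z ≠ 0
      · obtain ⟨j₀, hj₀m, hj₀⟩ := hex
        have : h z = e j₀ * g j₀ z := by
          rw [happ]
          refine Finset.sum_eq_single_of_mem j₀ hj₀m (fun j _ hj => ?_)
          rcases hdis z j j₀ hj with h0 | h0
          · rw [h0, mul_zero]
          · exact absurd h0 hj₀
        rw [Real.norm_eq_abs, this, abs_mul]
        have he1 : |e j₀| = 1 := by
          by_cases hc : φ (g j₀) < 0 <;> simp [he, hc]
        rw [he1, one_mul]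
        calc |g j₀ z| = ‖g j₀ z‖ := (Real.norm_eq_abs _).symm
          _ ≤ ‖g j₀‖ := (g j₀).norm_coe_le_norm z
          _ ≤ 1 := hb j₀
      · push_neg at hex
        have : h z = 0 := by
          rw [happ]
          exact Finset.sum_eq_zero (fun j hj => by rw [hex j hj, mul_zero])
        simp [this]
    calc ∑ j ∈ Finset.range n, |φ (g j)| = φ h := hφh.symm
      _ ≤ ‖φ‖ * ‖h‖ := le_trans (le_abs_self _) (by rw [← Real.norm_eq_abs]; exact φ.le_opNorm h)
      _ ≤ ‖φ‖ := mul_le_of_le_one_right (ContinuousLinearMap.opNorm_nonneg φ) hhn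
  have hsum : Summable (fun j => |φ (g j)|) :=
    summable_of_sum_range_le (fun j => abs_nonneg _) key
  have h0 := hsum.tendsto_atTop_zero
  rw [tendsto_zero_iff_norm_tendsto_zero]
  simpa [Real.norm_eq_abs] using h0


/-! ### Quotient map -/

section Main

variable {X : Type*} [NormedAddCommGroup X] [NormedSpace ℝ X]

def qmap (Y : Submodule ℝ X) : X →L[ℝ] X ⧸ Y :=
  LinearMap.mkContinuous Y.mkQ 1 (fun x => by
    rw [one_mul]
    exact Submodule.Quotient.norm_mk_le Y x)

lemma qmap_apply (Y : Submodule ℝ X) (x : X) : qmap Y x = Submodule.Quotient.mk x := rfl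

lemma exists_approx (Y : Submodule ℝ X) (x : X) {δ : ℝ} (hδ : 0 < δ) (h : ‖qmap Y x‖ < δ) :
    ∃ y ∈ Y, ‖x - y‖ ≤ 2 * δ := by
  obtain ⟨m, hm, hmn⟩ := Submodule.Quotient.norm_mk_lt (qmap Y x) hδ
  rw [qmap_apply] at hm
  have hxm : x - m ∈ Y := by
    rw [← Submodule.Quotient.eq]
    exact hm.symm
  refine ⟨x - m, hxm, ?_⟩
  have hx : x - (x - m) = m := by abel
  rw [hx]
  have : ‖m‖ < δ + δ := lt_trans hmn (by linarith)
  linarith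

variable {Y : Submodule ℝ X} {T : CantorC →L[ℝ] X}

structure Nd (Y : Submodule ℝ X) (T : CantorC →L[ℝ] X) where
  B : Set CantorSet
  y : X
  eta : ℝ
  clopen : IsClopen B
  infinite : B.Infinite
  mem : y ∈ Y
  close : ‖y - T (ind B)‖ ≤ eta

lemma Nd.eta_nonneg (N : Nd Y T) : 0 ≤ N.eta := le_trans (norm_nonneg _) N.close

lemma key_exists (hS : HasSchurProperty (X ⧸ Y)) {V : Set CantorSet} (hV : IsClopen V)
    (hVinf : V.Infinite) {δ : ℝ} (hδ : 0 < δ) :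
    ∃ N : Nd Y T, N.B ⊆ V ∧ (V \ N.B).Infinite ∧ N.eta = 2 * δ := by
  obtain ⟨z, hz⟩ := hVinf.nonempty
  obtain ⟨m, hm⟩ := exists_cyl_subset hV.isOpen hz
  set C : ℕ → Set CantorSet := fun j => cyl z (m + j) \ cyl z (m + j + 1) with hC
  have hCcl : ∀ j, IsClopen (C j) := fun j => (isClopen_cyl z (m+j)).diff (isClopen_cyl z (m+j+1))
  have hCsubV : ∀ j, C j ⊆ V := fun j =>
    (Set.diff_subset.trans (cyl_anti z (by omega))).trans hm
  have hCinf : ∀ j, (C j).Infinite := by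
    intro j
    set z' : CantorSet := fun i => if i = m + j then !(z i) else z i with hz'
    refine (cyl_infinite z' (m + j + 1)).mono ?_
    intro w hw
    constructor
    · intro i hi
      have hwi := hw i (by omega)
      rw [hwi, hz']
      simp only []
      rw [if_neg (by omega : ¬ i = m + j)]
    · intro hmem
      have h1 := hw (m + j) (by omega)
      have h2 := hmem (m + j) (by omega)
      rw [h2] at h1
      simp [hz'] at h1
  have hlt : ∀ j k, j < k → ∀ w, w ∈ C j → w ∈ C k → False := by
    intro j k hjk w hwj hwk
    exact hwj.2 (cyl_anti z (by omega : m + j + 1 ≤ m + k) hwk.1)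
  have hCdisj : ∀ j k, j ≠ k → Disjoint (C j) (C k) := by
    intro j k hjk
    rw [Set.disjoint_left]
    intro w hwj hwk
    rcases Nat.lt_or_ge j k with h | h
    · exact hlt j k h w hwj hwk
    · exact hlt k j (by omega) w hwk hwj
  have hgd : ∀ (z' : CantorSet) (j k : ℕ), j ≠ k → ind (C j) z' = 0 ∨ ind (C k) z' = 0 := by
    intro z' j k hjk
    by_cases h : z' ∈ C j
    · right
      exact ind_apply_not_mem (hCcl k) (Set.disjoint_left.1 (hCdisj j k hjk) h)
    · left
      exact ind_apply_not_mem (hCcl j) h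
  have weak : ∀ φ : (X ⧸ Y) →L[ℝ] ℝ,
      Tendsto (fun j => φ ((qmap Y) (T (ind (C j))))) atTop (𝓝 0) := by
    intro φ
    have := tendsto_eval_zero (fun j => ind (C j)) (fun j => norm_ind_le _) hgd
      (φ.comp ((qmap Y).comp T))
    simpa using this
  have schur := hS (fun j => qmap Y (T (ind (C j)))) 0 (fun φ => by
    rw [_root_.map_zero]
    exact weak φ)
  have hn : Tendsto (fun j => ‖qmap Y (T (ind (C j)))‖) atTop (𝓝 0) := by
    simpa using schur.norm
  obtain ⟨j, hj⟩ := (hn.eventually_lt_const hδ).exists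
  obtain ⟨y, hyY, hy⟩ := exists_approx Y (T (ind (C j))) hδ hj
  refine ⟨⟨C j, y, 2 * δ, hCcl j, hCinf j, hyY, by rwa [norm_sub_rev] at hy⟩,
    hCsubV j, ?_, rfl⟩
  refine (hCinf (j+1)).mono ?_
  intro w hw
  exact ⟨hCsubV (j+1) hw, fun hwj => hlt j (j+1) (by omega) w hwj hw⟩

lemma split_exists (hS : HasSchurProperty (X ⧸ Y)) (N : Nd Y T) {δ : ℝ} (hδ : 0 < δ) :
    ∃ P : Nd Y T × Nd Y T, P.1.B ⊆ N.B ∧ P.2.B = N.B \ P.1.B ∧ P.2.y = N.y - P.1.y ∧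
      P.1.eta = 2 * δ ∧ P.2.eta = N.eta + 2 * δ := by
  obtain ⟨N₁, hsub, hinf, heta⟩ := key_exists (T := T) hS N.clopen N.infinite hδ
  have hclose : ‖(N.y - N₁.y) - T (ind (N.B \ N₁.B))‖ ≤ N.eta + 2 * δ := by
    rw [ind_diff N₁.clopen N.clopen hsub, _root_.map_sub]
    have hre : (N.y - N₁.y) - (T (ind N.B) - T (ind N₁.B))
        = (N.y - T (ind N.B)) - (N₁.y - T (ind N₁.B)) := by abel
    rw [hre]
    refine le_trans (norm_sub_le _ _) ?_
    exact add_le_add N.close (le_of_eq_of_le (by rfl) (heta ▸ N₁.close))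
  exact ⟨(N₁, ⟨N.B \ N₁.B, N.y - N₁.y, N.eta + 2 * δ, N.clopen.diff N₁.clopen, hinf,
    sub_mem N.mem N₁.mem, hclose⟩), hsub, rfl, rfl, heta, rfl⟩

/-! ### The dyadic tree of nodes -/

def splitP (hS : HasSchurProperty (X ⧸ Y)) (N : Nd Y T) {δ : ℝ} (hδ : 0 < δ) : Nd Y T × Nd Y T :=
  (split_exists hS N hδ).choose

lemma splitP_spec (hS : HasSchurProperty (X ⧸ Y)) (N : Nd Y T) {δ : ℝ} (hδ : 0 < δ) :
    (splitP hS N hδ).1.B ⊆ N.B ∧ (splitP hS N hδ).2.B = N.B \ (splitP hS N hδ).1.B ∧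
      (splitP hS N hδ).2.y = N.y - (splitP hS N hδ).1.y ∧
      (splitP hS N hδ).1.eta = 2 * δ ∧ (splitP hS N hδ).2.eta = N.eta + 2 * δ :=
  (split_exists hS N hδ).choose_spec

def rootN (hS : HasSchurProperty (X ⧸ Y)) (T : CantorC →L[ℝ] X) {δ : ℝ} (hδ : 0 < δ) : Nd Y T :=
  (key_exists (T := T) hS isClopen_univ univ_infinite hδ).choose

lemma rootN_eta (hS : HasSchurProperty (X ⧸ Y)) (T : CantorC →L[ℝ] X) {δ : ℝ} (hδ : 0 < δ) :
    (rootN hS T hδ).eta = 2 * δ :=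
  (key_exists (T := T) hS isClopen_univ univ_infinite hδ).choose_spec.2.2

def dlt (ε : ℝ) (n : ℕ) : ℝ := ε / (16 * 4 ^ n)

lemma dlt_pos {ε : ℝ} (hε : 0 < ε) (n : ℕ) : 0 < dlt ε n := by
  unfold dlt
  positivity

def tree (hS : HasSchurProperty (X ⧸ Y)) (T : CantorC →L[ℝ] X) {ε : ℝ} (hε : 0 < ε) :
    (n : ℕ) → (Fin n → Bool) → Nd Y T
  | 0, _ => rootN hS T (show (0:ℝ) < ε / 8 by positivity)
  | (n+1), t =>
      cond (t (Fin.last n))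
        (splitP hS (tree hS T hε n (Fin.init t)) (dlt_pos hε n)).1
        (splitP hS (tree hS T hε n (Fin.init t)) (dlt_pos hε n)).2

variable (hS : HasSchurProperty (X ⧸ Y)) {ε : ℝ} (hε : 0 < ε)

lemma tree_snoc_true (n : ℕ) (s : Fin n → Bool) :
    tree hS T hε (n+1) (Fin.snoc s true)
      = (splitP hS (tree hS T hε n s) (dlt_pos hε n)).1 := by
  show cond ((Fin.snoc s true : Fin (n+1) → Bool) (Fin.last n)) _ _ = _
  rw [Fin.snoc_last, Fin.init_snoc]
  rfl

lemma tree_snoc_false (n : ℕ) (s : Fin n → Bool) :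
    tree hS T hε (n+1) (Fin.snoc s false)
      = (splitP hS (tree hS T hε n s) (dlt_pos hε n)).2 := by
  show cond ((Fin.snoc s false : Fin (n+1) → Bool) (Fin.last n)) _ _ = _
  rw [Fin.snoc_last, Fin.init_snoc]
  rfl

lemma tree_sub (n : ℕ) (s : Fin n → Bool) (b : Bool) :
    (tree hS T hε (n+1) (Fin.snoc s b)).B ⊆ (tree hS T hε n s).B := by
  cases b
  · rw [tree_snoc_false]
    rw [(splitP_spec hS (tree hS T hε n s) (dlt_pos hε n)).2.1]
    exact Set.diff_subset
  · rw [tree_snoc_true]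
    exact (splitP_spec hS (tree hS T hε n s) (dlt_pos hε n)).1

lemma tree_disjoint : ∀ (n : ℕ) (s t : Fin n → Bool), s ≠ t →
    Disjoint (tree hS T hε n s).B (tree hS T hε n t).B := by
  intro n
  induction n with
  | zero => intro s t hst; exact absurd (funext (fun i => i.elim0)) hst
  | succ n ih =>
    intro s t hst
    rw [← Fin.snoc_init_self s, ← Fin.snoc_init_self t]
    by_cases hinit : Fin.init s = Fin.init t
    · have hlast : s (Fin.last n) ≠ t (Fin.last n) := by
        intro h
        apply hst
        rw [← Fin.snoc_init_self s, ← Fin.snoc_init_self t, hinit, h]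
      have hdisj : Disjoint (splitP hS (tree hS T hε n (Fin.init t)) (dlt_pos hε n)).1.B
          (splitP hS (tree hS T hε n (Fin.init t)) (dlt_pos hε n)).2.B := by
        rw [(splitP_spec hS (tree hS T hε n (Fin.init t)) (dlt_pos hε n)).2.1]
        exact Set.disjoint_sdiff_right
      rcases Bool.eq_false_or_eq_true (s (Fin.last n)) with hsb | hsb <;>
        rcases Bool.eq_false_or_eq_true (t (Fin.last n)) with htb | htb
      · exact absurd (hsb.trans htb.symm) hlast
      · rw [hsb, htb, hinit, tree_snoc_false, tree_snoc_true]
        exact hdisj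
      · rw [hsb, htb, hinit, tree_snoc_true, tree_snoc_false]
        exact hdisj.symm
      · exact absurd (hsb.trans htb.symm) hlast
    · exact Set.disjoint_of_subset (tree_sub hS hε n _ _) (tree_sub hS hε n _ _)
        (ih (Fin.init s) (Fin.init t) hinit)

lemma tree_y_add (n : ℕ) (s : Fin n → Bool) :
    (tree hS T hε (n+1) (Fin.snoc s false)).y
      = (tree hS T hε n s).y - (tree hS T hε (n+1) (Fin.snoc s true)).y := by
  rw [tree_snoc_false, tree_snoc_true]
  exact (splitP_spec hS (tree hS T hε n s) (dlt_pos hε n)).2.2.1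

lemma tree_eta_true (n : ℕ) (s : Fin n → Bool) :
    (tree hS T hε (n+1) (Fin.snoc s true)).eta = 2 * dlt ε n := by
  rw [tree_snoc_true]
  exact (splitP_spec hS (tree hS T hε n s) (dlt_pos hε n)).2.2.2.1

lemma tree_eta_false (n : ℕ) (s : Fin n → Bool) :
    (tree hS T hε (n+1) (Fin.snoc s false)).eta = (tree hS T hε n s).eta + 2 * dlt ε n := by
  rw [tree_snoc_false]
  exact (splitP_spec hS (tree hS T hε n s) (dlt_pos hε n)).2.2.2.2

lemma sum_bool' {M : Type*} [AddCommMonoid M] (f : Bool → M) :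
    ∑ b : Bool, f b = f false + f true := by
  rw [Fintype.univ_bool, Finset.sum_pair (by decide : true ≠ false)]
  exact add_comm _ _

lemma sum_snoc {M : Type*} [AddCommMonoid M] (n : ℕ) (F : (Fin (n+1) → Bool) → M) :
    ∑ t : Fin (n+1) → Bool, F t
      = ∑ s : Fin n → Bool, (F (Fin.snoc s false) + F (Fin.snoc s true)) := by
  rw [← Equiv.sum_comp (Equiv.mk (fun (p : (Fin n → Bool) × Bool) => Fin.snoc p.1 p.2)
    (fun t => (Fin.init t, t (Fin.last n))) (fun p => by simp) (fun t => by simp)) F,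
    Fintype.sum_prod_type]
  refine Finset.sum_congr rfl (fun s _ => ?_)
  simp only [Equiv.coe_fn_mk]
  exact sum_bool' (fun b => F (Fin.snoc s b))

lemma card_fun_bool (n : ℕ) : (Fintype.card (Fin n → Bool) : ℝ) = 2 ^ n := by
  rw [Fintype.card_fun]
  simp

lemma tree_eta_sum (n : ℕ) :
    ∑ s : Fin n → Bool, (tree hS T hε n s).eta
      ≤ ε / 4 + ∑ k ∈ Finset.range n, (ε / 4) * (1/2)^k := by
  induction n with
  | zero =>
    have : ∑ s : Fin 0 → Bool, (tree hS T hε 0 s).eta = (ε / 8) * 2 := by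
      rw [Fintype.sum_subsingleton _ (fun (i : Fin 0) => false)]
      show (rootN hS T _).eta = _
      rw [rootN_eta]
      ring
    rw [this]
    simp
    linarith
  | succ n ih =>
    rw [sum_snoc]
    have heach : ∀ s : Fin n → Bool,
        (tree hS T hε (n+1) (Fin.snoc s false)).eta + (tree hS T hε (n+1) (Fin.snoc s true)).eta
          = (tree hS T hε n s).eta + 4 * dlt ε n := by
      intro s
      rw [tree_eta_false, tree_eta_true]
      ring
    rw [Finset.sum_congr rfl (fun s _ => heach s), Finset.sum_add_distrib,
      Finset.sum_const, Finset.range_add_one, Finset.sum_insert (by simp)]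
    have hcard : (Finset.univ : Finset (Fin n → Bool)).card • (4 * dlt ε n)
        = (ε / 4) * (1/2)^n := by
      rw [Finset.card_univ, nsmul_eq_mul, card_fun_bool]
      unfold dlt
      rw [show ((4:ℝ))^n = 2^n * 2^n from by rw [← mul_pow]; norm_num]
      field_simp
      have h2 : (2:ℝ)^n * (1/2)^n = 1 := by rw [← mul_pow]; norm_num
      linear_combination (-16) * h2
    rw [hcard]
    linarith [ih]

end Main

/-! ### evaluation points and level-constant functions -/

def xpt (n : ℕ) (s : Fin n → Bool) : CantorSet := fun i => if h : i < n then s ⟨i, h⟩ else false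

lemma xpt_lt (n : ℕ) (s : Fin n → Bool) {i : ℕ} (h : i < n) : xpt n s i = s ⟨i, h⟩ := dif_pos h

lemma xpt_not_lt (n : ℕ) (s : Fin n → Bool) {i : ℕ} (h : ¬ i < n) : xpt n s i = false := dif_neg h

lemma xpt_snoc_agree (n : ℕ) (s : Fin n → Bool) (b : Bool) {i : ℕ} (hi : i < n) :
    xpt (n+1) (Fin.snoc s b) i = xpt n s i := by
  rw [xpt_lt (n+1) _ (by omega), xpt_lt n s hi]
  have hc : (⟨i, by omega⟩ : Fin (n+1)) = Fin.castSucc ⟨i, hi⟩ := rfl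
  rw [hc, Fin.snoc_castSucc]

lemma xpt_snoc_false (n : ℕ) (s : Fin n → Bool) : xpt (n+1) (Fin.snoc s false) = xpt n s := by
  funext i
  by_cases hi : i < n
  · exact xpt_snoc_agree n s false hi
  · by_cases hin : i = n
    · subst hin
      rw [xpt_not_lt _ s (lt_irrefl _), xpt_lt (i+1) _ (by omega)]
      have hl : (⟨i, by omega⟩ : Fin (i+1)) = Fin.last i := rfl
      rw [hl, Fin.snoc_last]
    · rw [xpt_not_lt n s hi, xpt_not_lt (n+1) _ (by omega)]

def Lev (m : ℕ) (f : CantorC) : Prop :=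
  ∀ z w : CantorSet, (∀ i, i < m → z i = w i) → f z = f w

lemma lev_mono {m m' : ℕ} (h : m ≤ m') {f : CantorC} (hf : Lev m f) : Lev m' f :=
  fun z w hz => hf z w (fun i hi => hz i (lt_of_lt_of_le hi h))

def levAlg : Subalgebra ℝ C(CantorSet, ℝ) where
  carrier := {f | ∃ m, Lev m f}
  add_mem' := by
    rintro f g ⟨m, hm⟩ ⟨m', hm'⟩
    refine ⟨max m m', fun z w hz => ?_⟩
    rw [ContinuousMap.add_apply, ContinuousMap.add_apply,
      lev_mono (le_max_left m m') hm z w hz, lev_mono (le_max_right m m') hm' z w hz]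
  mul_mem' := by
    rintro f g ⟨m, hm⟩ ⟨m', hm'⟩
    refine ⟨max m m', fun z w hz => ?_⟩
    rw [ContinuousMap.mul_apply, ContinuousMap.mul_apply,
      lev_mono (le_max_left m m') hm z w hz, lev_mono (le_max_right m m') hm' z w hz]
  algebraMap_mem' := fun r => ⟨0, fun z w _ => rfl⟩

lemma levAlg_sep : levAlg.SeparatesPoints := by
  intro z w hzw
  obtain ⟨i, hi⟩ := Function.ne_iff.1 hzw
  have hcont : Continuous (fun v : CantorSet => if v i then (1:ℝ) else 0) := by
    exact Continuous.comp (continuous_of_discreteTopology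
      (f := fun b : Bool => if b then (1:ℝ) else 0)) (continuous_apply i)
  refine ⟨(fun v : CantorSet => if v i then (1:ℝ) else 0), ⟨⟨_, hcont⟩, ⟨i+1, ?_⟩, rfl⟩, ?_⟩
  · intro z' w' hz'
    show (if z' i then (1:ℝ) else 0) = (if w' i then (1:ℝ) else 0)
    rw [hz' i (by omega)]
  · show (if z i then (1:ℝ) else 0) ≠ (if w i then (1:ℝ) else 0)
    cases hz : z i <;> cases hw : w i <;> simp_all

lemma dense_lev (f : CantorC) {ζ : ℝ} (hζ : 0 < ζ) :
    ∃ (m : ℕ) (g : CantorC), Lev m g ∧ ‖f - g‖ ≤ ζ := by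
  have htop := ContinuousMap.subalgebra_topologicalClosure_eq_top_of_separatesPoints
    levAlg levAlg_sep
  have hmem : f ∈ closure (levAlg : Set C(CantorSet, ℝ)) := by
    rw [← Subalgebra.topologicalClosure_coe, htop]
    simp
  obtain ⟨g, hgA, hfg⟩ := Metric.mem_closure_iff.1 hmem ζ hζ
  obtain ⟨m, hm⟩ := hgA
  exact ⟨m, g, hm, by rw [← dist_eq_norm]; exact le_of_lt hfg⟩

/-! ### The approximating operators -/

section Main2

variable {X : Type*} [NormedAddCommGroup X] [NormedSpace ℝ X]
variable {Y : Submodule ℝ X} {T : CantorC →L[ℝ] X}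
variable (hS : HasSchurProperty (X ⧸ Y)) {ε : ℝ} (hε : 0 < ε)

lemma tree_eta_sum_le (n : ℕ) : ∑ s : Fin n → Bool, (tree hS T hε n s).eta ≤ ε := by
  refine le_trans (tree_eta_sum hS hε n) ?_
  have hg := sum_geometric_two_le n
  have h1 : ∑ k ∈ Finset.range n, (ε / 4) * (1/2)^k
      = (ε / 4) * ∑ k ∈ Finset.range n, (1/(2:ℝ))^k := by
    rw [Finset.mul_sum]
  rw [h1]
  nlinarith

def Qop (T : CantorC →L[ℝ] X) (n : ℕ) : CantorC →L[ℝ] X :=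
  ∑ s : Fin n → Bool,
    (ContinuousMap.evalCLM ℝ (xpt n s)).smulRight ((tree hS T hε n s).y)

lemma Qop_apply (n : ℕ) (f : CantorC) :
    Qop hS hε T n f = ∑ s : Fin n → Bool, f (xpt n s) • (tree hS T hε n s).y := by
  rw [Qop, ContinuousLinearMap.sum_apply]
  exact Finset.sum_congr rfl (fun s _ => rfl)

lemma Qop_mem (n : ℕ) (f : CantorC) : Qop hS hε T n f ∈ Y := by
  rw [Qop_apply]
  exact Submodule.sum_mem _ (fun s _ => Submodule.smul_mem _ _ (tree hS T hε n s).mem)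

def comb (T : CantorC →L[ℝ] X) (n : ℕ) (f : CantorC) : CantorC :=
  ∑ s : Fin n → Bool, f (xpt n s) • ind (tree hS T hε n s).B

lemma Qop_err (n : ℕ) (f : CantorC) :
    ‖Qop hS hε T n f - T (comb hS hε T n f)‖ ≤ ε * ‖f‖ := by
  rw [Qop_apply, comb, _root_.map_sum, ← Finset.sum_sub_distrib]
  refine le_trans (norm_sum_le _ _) ?_
  have hterm : ∀ s : Fin n → Bool,
      ‖f (xpt n s) • (tree hS T hε n s).y - T (f (xpt n s) • ind (tree hS T hε n s).B)‖
        ≤ ‖f‖ * (tree hS T hε n s).eta := by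
    intro s
    rw [_root_.map_smul, ← smul_sub, norm_smul, Real.norm_eq_abs]
    refine mul_le_mul ?_ (tree hS T hε n s).close (norm_nonneg _) (norm_nonneg f)
    rw [← Real.norm_eq_abs]
    exact f.norm_coe_le_norm _
  refine le_trans (Finset.sum_le_sum (fun s _ => hterm s)) ?_
  rw [← Finset.mul_sum]
  rw [mul_comm ε ‖f‖]
  exact mul_le_mul_of_nonneg_left (tree_eta_sum_le hS hε n) (norm_nonneg f)

lemma norm_comb_le' (n : ℕ) (f : CantorC) : ‖comb hS hε T n f‖ ≤ ‖f‖ := by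
  refine norm_comb_le (fun s => (tree hS T hε n s).clopen)
    (fun a b hab => tree_disjoint hS hε n a b hab) _ (norm_nonneg f) (fun s => ?_)
  rw [← Real.norm_eq_abs]
  exact f.norm_coe_le_norm _

lemma Qop_norm (n : ℕ) (f : CantorC) : ‖Qop hS hε T n f‖ ≤ (‖T‖ + ε) * ‖f‖ := by
  have h1 : Qop hS hε T n f = (Qop hS hε T n f - T (comb hS hε T n f)) + T (comb hS hε T n f) := by
    abel
  rw [h1]
  refine le_trans (norm_add_le _ _) ?_
  have h2 : ‖T (comb hS hε T n f)‖ ≤ ‖T‖ * ‖f‖ :=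
    le_trans (T.le_opNorm _)
      (mul_le_mul_of_nonneg_left (norm_comb_le' hS hε n f) (norm_nonneg _))
  have h3 := Qop_err (T := T) hS hε n f
  nlinarith [norm_nonneg f]

lemma Qop_succ (n : ℕ) (f : CantorC) :
    Qop hS hε T (n+1) f = Qop hS hε T n f
      + ∑ s : Fin n → Bool, (f (xpt (n+1) (Fin.snoc s true)) - f (xpt n s))
          • (tree hS T hε (n+1) (Fin.snoc s true)).y := by
  rw [Qop_apply, Qop_apply, sum_snoc, ← Finset.sum_add_distrib]
  refine Finset.sum_congr rfl (fun s _ => ?_)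
  rw [xpt_snoc_false, tree_y_add hS hε n s, smul_sub, sub_smul]
  abel

lemma Qop_lev {m : ℕ} {f : CantorC} (hf : Lev m f) :
    ∀ n, m ≤ n → Qop hS hε T n f = Qop hS hε T m f := by
  intro n hn
  induction n, hn using Nat.le_induction with
  | base => rfl
  | succ n hn ih =>
    rw [Qop_succ]
    have hzero : ∀ s : Fin n → Bool,
        f (xpt (n+1) (Fin.snoc s true)) - f (xpt n s) = 0 := by
      intro s
      rw [sub_eq_zero]
      exact hf _ _ (fun i hi => xpt_snoc_agree n s true (lt_of_lt_of_le hi hn))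
    simp only [hzero, zero_smul, Finset.sum_const_zero, add_zero]
    exact ih

lemma lev_norm_le {m : ℕ} {f : CantorC} (hf : Lev m f) (n : ℕ) (hn : m ≤ n) :
    ‖f‖ ≤ ‖comb hS hε T n f‖ := by
  rw [ContinuousMap.norm_le _ (norm_nonneg _)]
  intro z
  set s : Fin n → Bool := fun j => z j.1 with hsdef
  have hz : f z = f (xpt n s) := by
    refine hf z (xpt n s) (fun i hi => ?_)
    rw [xpt_lt n s (lt_of_lt_of_le hi hn)]
  rw [Real.norm_eq_abs, hz]
  obtain ⟨zs, hzs⟩ := (tree hS T hε n s).infinite.nonempty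
  exact le_norm_comb (fun s' => (tree hS T hε n s').clopen)
    (fun a b hab => tree_disjoint hS hε n a b hab) (fun s' => f (xpt n s')) hzs

lemma Qop_lower {c : ℝ} (hc : 0 ≤ c) (hT : ∀ x : CantorC, c * ‖x‖ ≤ ‖T x‖)
    {m : ℕ} {f : CantorC} (hf : Lev m f) :
    (c - ε) * ‖f‖ ≤ ‖Qop hS hε T m f‖ := by
  have h1 := Qop_err (T := T) hS hε m f
  have h2 : c * ‖f‖ ≤ ‖T (comb hS hε T m f)‖ :=
    le_trans (mul_le_mul_of_nonneg_left (lev_norm_le hS hε hf m le_rfl) hc) (hT _)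
  have h4 : ‖T (comb hS hε T m f)‖ ≤ ‖Qop hS hε T m f‖
      + ‖T (comb hS hε T m f) - Qop hS hε T m f‖ := norm_le_insert' _ _
  rw [norm_sub_rev] at h4
  nlinarith [norm_nonneg f]

end Main2

end NUAux
end NUAux

/-- **Proposition.** If `Y` is a closed subspace of a Banach space `X` such that the
quotient `X/Y` has the Schur property and `Y` is non-universal (contains no isomorphic
copy of `C(2^ℕ)`), then `X` is non-universal. -/



theorem nonuniversal_of_schur_quotient (X : Type*) [NormedAddCommGroup X]
    [NormedSpace ℝ X] [CompleteSpace X]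
    (Y : Submodule ℝ X) (hY : IsClosed (Y : Set X))
    (hSchur : HasSchurProperty (X ⧸ Y)) (hYnu : ¬ Embeds CantorC ↥Y) :
    ¬ Embeds CantorC X := by
  rintro ⟨T, c, hc, hT⟩
  apply hYnu
  have hε : 0 < c / 2 := half_pos hc
  set Q : ℕ → CantorC →L[ℝ] X := fun n => NUAux.Qop (Y := Y) hSchur hε T n with hQdef
  set M : ℝ := ‖T‖ + c / 2 with hMdef
  have hM0 : 0 < M := add_pos_of_nonneg_of_pos (norm_nonneg _) hε
  have hQle : ∀ (n : ℕ) (f : CantorC), ‖Q n f‖ ≤ M * ‖f‖ :=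
    fun n f => NUAux.Qop_norm hSchur hε n f
  have hQlev : ∀ (m : ℕ) (f : CantorC), NUAux.Lev m f → ∀ n, m ≤ n → Q n f = Q m f :=
    fun m f hf => NUAux.Qop_lev hSchur hε hf
  have hQmem : ∀ (n : ℕ) (f : CantorC), Q n f ∈ Y :=
    fun n f => NUAux.Qop_mem hSchur hε n f
  have hcauchy : ∀ f : CantorC, CauchySeq (fun n => Q n f) := by
    intro f
    rw [Metric.cauchySeq_iff]
    intro ζ hζ
    obtain ⟨m, g, hg, hfg⟩ := NUAux.dense_lev f (show 0 < ζ / (2*M+1) by positivity)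
    refine ⟨m, fun n hn n' hn' => ?_⟩
    have key : ∀ k, m ≤ k → dist (Q k f) (Q m g) ≤ M * (ζ / (2*M+1)) := by
      intro k hk
      have heq : Q k f - Q m g = Q k (f - g) := by
        rw [_root_.map_sub, hQlev m g hg k hk]
      rw [dist_eq_norm, heq]
      exact le_trans (hQle k (f-g)) (mul_le_mul_of_nonneg_left hfg (le_of_lt hM0))
    calc dist (Q n f) (Q n' f)
        ≤ dist (Q n f) (Q m g) + dist (Q n' f) (Q m g) := dist_triangle_right _ _ _
      _ ≤ M * (ζ/(2*M+1)) + M * (ζ/(2*M+1)) := add_le_add (key n hn) (key n' hn')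
      _ < ζ := by
          rw [show M * (ζ/(2*M+1)) + M * (ζ/(2*M+1)) = (2*M) * ζ / (2*M+1) by ring,
            div_lt_iff₀ (by positivity)]
          nlinarith
  choose u hu using fun f => cauchySeq_tendsto_of_complete (hcauchy f)
  have hmem : ∀ f, u f ∈ Y := fun f =>
    hY.mem_of_tendsto (hu f) (Filter.Eventually.of_forall (fun n => hQmem n f))
  have hadd : ∀ f g, u (f + g) = u f + u g := by
    intro f g
    refine tendsto_nhds_unique (hu (f+g)) ?_
    have heq : (fun n => Q n (f+g)) = fun n => Q n f + Q n g := by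
      funext n; rw [_root_.map_add]
    rw [heq]
    exact (hu f).add (hu g)
  have hsmul : ∀ (a : ℝ) (f : CantorC), u (a • f) = a • u f := by
    intro a f
    refine tendsto_nhds_unique (hu (a • f)) ?_
    have heq : (fun n => Q n (a • f)) = fun n => a • Q n f := by
      funext n; rw [_root_.map_smul]
    rw [heq]
    exact (hu f).const_smul a
  have hsub : ∀ f g, u (f - g) = u f - u g := by
    intro f g
    rw [sub_eq_add_neg, hadd, show -g = (-1 : ℝ) • g by rw [neg_one_smul], hsmul]
    simp [sub_eq_add_neg]
  have hub : ∀ f, ‖u f‖ ≤ M * ‖f‖ := fun f =>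
    le_of_tendsto (hu f).norm (Filter.Eventually.of_forall (fun n => hQle n f))
  have hlev : ∀ (m : ℕ) (f : CantorC), NUAux.Lev m f → (c/2) * ‖f‖ ≤ ‖u f‖ := by
    intro m f hf
    have he : u f = Q m f :=
      tendsto_nhds_unique (hu f)
        (tendsto_atTop_of_eventually_const (i₀ := m) (fun n hn => hQlev m f hf n hn))
    rw [he]
    have hlo := NUAux.Qop_lower hSchur hε (le_of_lt hc) hT hf
    rwa [show c - c/2 = c/2 by ring] at hlo
  have hlow : ∀ f, (c/2) * ‖f‖ ≤ ‖u f‖ := by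
    intro f
    by_contra hcon
    push_neg at hcon
    set ζ : ℝ := ((c/2) * ‖f‖ - ‖u f‖) / ((c/2) + M + 1) with hζd
    have hζ : 0 < ζ := by
      rw [hζd]
      exact div_pos (sub_pos.2 hcon) (add_pos (add_pos hε hM0) one_pos)
    obtain ⟨m, g, hg, hfg⟩ := NUAux.dense_lev f hζ
    have h1 : (c/2) * ‖g‖ ≤ ‖u g‖ := hlev m g hg
    have h2 : ‖u f - u g‖ ≤ M * ζ := by
      rw [← hsub]
      exact (hub (f-g)).trans (mul_le_mul_of_nonneg_left hfg hM0.le)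
    have h3 : ‖f‖ - ζ ≤ ‖g‖ := by
      have := norm_sub_norm_le f g
      linarith
    have h4 : ‖u g‖ ≤ ‖u f‖ + M * ζ := by
      have hnn := norm_sub_norm_le (u g) (u f)
      rw [norm_sub_rev] at hnn
      linarith
    have h5 : (c/2) * (‖f‖ - ζ) ≤ (c/2) * ‖g‖ :=
      mul_le_mul_of_nonneg_left h3 (by positivity)
    have h6 : ζ * ((c/2) + M + 1) = (c/2) * ‖f‖ - ‖u f‖ := by
      rw [hζd]
      field_simp
    rw [mul_sub] at h5
    have h7 : ζ * ((c/2) + M + 1) = ζ * (c/2) + ζ * M + ζ := by ring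
    have h8 : ζ * (c/2) = (c/2) * ζ := by ring
    have h9 : ζ * M = M * ζ := by ring
    rw [h7, h8, h9] at h6
    clear_value Q M ζ
    linarith
  let ulin : CantorC →ₗ[ℝ] X :=
    { toFun := u, map_add' := hadd, map_smul' := hsmul }
  let U : CantorC →L[ℝ] X := LinearMap.mkContinuous ulin M hub
  refine ⟨U.codRestrict Y hmem, c/2, hε, fun f => ?_⟩
  have hnorm : ‖(U.codRestrict Y hmem) f‖ = ‖U f‖ := rfl
  rw [hnorm]
  exact hlow f
end

section
/- Let (t_n) be the enumeration of 𝒪 according to the bijection h. Then the sequence (f_{t_n}) is a normalized monotone Schauder basis of C(2^ℕ). -/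
open Filter Topology MeasureTheory

noncomputable section

/-- The set `𝒪 ⊆ 2^{<ℕ}`: the empty sequence together with all finite
sequences ending with `0` (`false`). -/
def OSet : Set (List Bool) := {l | l = [] ∨ ∃ s : List Bool, l = s ++ [false]}

/-- `s ≺ t` for nodes of the Cantor tree: `s` and `t` are incomparable and, with
`w = s ∧ t` their longest common initial segment, `w⌢0 ⊑ s` and `w⌢1 ⊑ t`. -/
def PrecBelow (s t : List Bool) : Prop :=
  ∃ w : List Bool, (w ++ [false]) <+: s ∧ (w ++ [true]) <+: t

/-- `t` is the enumeration of `𝒪` according to the canonical bijection `h : 𝒪 → ℕ`,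
i.e. `t` is a bijection `ℕ → 𝒪` with `t⁻¹ t₁ < t⁻¹ t₂` whenever `|t₁| < |t₂|`, or
`|t₁| = |t₂|` and `t₁ ≺ t₂`. -/
def IsOEnum (t : ℕ → List Bool) : Prop :=
  Function.Injective t ∧ Set.range t = OSet ∧
  ∀ m n : ℕ,
    ((t m).length < (t n).length ∨
      ((t m).length = (t n).length ∧ PrecBelow (t m) (t n))) →
    m < n

/-- A dyadic subtree `D = (s_t)_{t ∈ 2^{<ℕ}}` of the Cantor tree: `t₁ ⊏ t₂` iff
`s_{t₁} ⊏ s_{t₂}` and `t₁ ≺ t₂` iff `s_{t₁} ≺ s_{t₂}`. -/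
def IsDyadicSubtree (s : List Bool → List Bool) : Prop :=
  ∀ t₁ t₂ : List Bool,
    ((t₁ <+: t₂ ∧ t₁ ≠ t₂) ↔ (s t₁ <+: s t₂ ∧ s t₁ ≠ s t₂)) ∧
    (PrecBelow t₁ t₂ ↔ PrecBelow (s t₁) (s t₂))

/-- The function `f_t = χ_{V_t} ∈ C(2^ℕ)`: the characteristic function of the clopen
set `V_t = {σ ∈ 2^ℕ : t ⊏ σ}` determined by the node `t ∈ 2^{<ℕ}`. -/
def cylFun (t : List Bool) : CantorC :=
  ⟨fun σ => ∏ i ∈ Finset.range t.length,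
      (fun b : Bool => if b = t.getD i false then (1:ℝ) else 0) (σ i), by
    refine continuous_finset_prod _ fun i _ => ?_
    exact (continuous_of_discreteTopology
      (f := fun b : Bool => if b = t.getD i false then (1:ℝ) else 0)).comp
      (continuous_apply i)⟩

end

noncomputable section
namespace CylAux

/-- First `m` values of `σ` as a list. -/
def trunc (σ : CantorSet) (m : ℕ) : List Bool := List.ofFn fun i : Fin m => σ i

/-- `σ` truncated at `M` and extended by `true`s. -/
def extC (σ : CantorSet) (M : ℕ) : CantorSet := fun i => if i < M then σ i else true

/-- The point `u⌢1^∞`. -/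
def epoint (u : List Bool) : CantorSet := fun i => u.getD i true

/-- The biorthogonal coefficient functional associated to a node `u ∈ 𝒪`. -/
def coefF (u : List Bool) (g : CantorC) : ℝ :=
  if u = [] then g (epoint u) else g (epoint u) - g (epoint u.dropLast)

@[simp] lemma length_trunc (σ : CantorSet) (m : ℕ) : (trunc σ m).length = m := by
  simp [trunc]

lemma trunc_succ (σ : CantorSet) (m : ℕ) :
    trunc σ (m + 1) = trunc σ m ++ [σ m] := by
  rw [trunc, List.ofFn_succ']
  simp [trunc, List.concat_eq_append, Fin.castSucc]

lemma dropLast_trunc_succ (σ : CantorSet) (m : ℕ) :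
    (trunc σ (m + 1)).dropLast = trunc σ m := by
  rw [trunc_succ]
  exact List.dropLast_concat

@[simp] lemma trunc_zero (σ : CantorSet) : trunc σ 0 = [] := rfl

lemma epoint_trunc (σ : CantorSet) (m : ℕ) : epoint (trunc σ m) = extC σ m := by
  funext i
  show (trunc σ m).getD i true = _
  unfold extC
  by_cases h : i < m
  · rw [List.getD_eq_getElem _ _ (by simpa using h), if_pos h]
    simp [trunc]
  · rw [List.getD_eq_default _ _ (by simpa using h), if_neg h]

lemma extC_congr {σ : CantorSet} {a b : ℕ} (hab : a ≤ b)
    (h : ∀ p, a ≤ p → p < b → σ p = true) : extC σ a = extC σ b := by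
  funext i
  unfold extC
  by_cases h1 : i < a
  · rw [if_pos h1, if_pos (h1.trans_le hab)]
  · rw [if_neg h1]
    by_cases h2 : i < b
    · rw [if_pos h2, h i (not_lt.mp h1) h2]
    · rw [if_neg h2]

lemma cylFun_apply (u : List Bool) (σ : CantorSet) :
    cylFun u σ = if trunc σ u.length = u then 1 else 0 := by
  show (∏ i ∈ Finset.range u.length, (if σ i = u.getD i false then (1:ℝ) else 0)) = _
  rw [Finset.prod_boole]
  congr 1
  simp only [eq_iff_iff]
  constructor
  · intro h
    apply List.ext_getElem (by simp)
    intro i h1 h2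
    simp only [trunc, List.getElem_ofFn]
    rw [h i (by simpa using h2), List.getD_eq_getElem]
  · intro h i hi
    have h2 : i < u.length := by simpa using hi
    have := congrArg (fun l => l.getD i false) h
    simpa [trunc, List.getD_eq_getElem, h2] using this

lemma trunc_mem_OSet (σ : CantorSet) {p : ℕ} (hp : σ p = false) :
    trunc σ (p + 1) ∈ OSet := by
  right
  exact ⟨trunc σ p, by rw [trunc_succ, hp]⟩

lemma trunc_epoint_eq_iff {u : List Bool} (hu : u ∈ OSet) (v : List Bool) :
    trunc (epoint v) u.length = u ↔ u <+: v := by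
  show (List.ofFn fun i : Fin u.length => v.getD i true) = u ↔ u <+: v
  constructor
  · intro h
    rcases hu with rfl | ⟨s, rfl⟩
    · exact List.nil_prefix
    · have key : ∀ i, i < s.length + 1 → v.getD i true = (s ++ [false]).getD i true := by
        intro i hi
        have h1 : i < (List.ofFn fun i : Fin (s ++ [false]).length => v.getD i true).length := by
          simp; omega
        have h2 := List.getElem_of_eq h h1
        simp only [List.getElem_ofFn] at h2
        rw [List.getD_eq_getElem (s ++ [false]) true (by simp; omega)]
        exact h2
      have hlen : s.length + 1 ≤ v.length := by
        by_contra hc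
        have := key s.length (by omega)
        rw [List.getD_eq_default v _ (by omega),
            List.getD_eq_getElem _ _ (by simp)] at this
        simp at this
      have hvt : s ++ [false] = v.take (s.length + 1) := by
        apply List.ext_getElem (by simp; omega)
        intro i h1 h2
        have h3 : i < s.length + 1 := by simpa using h1
        rw [List.getElem_take, ← List.getD_eq_getElem v true (by omega), key i h3,
            List.getD_eq_getElem]
      rw [hvt]
      exact List.take_prefix _ _
  · rintro ⟨r, rfl⟩
    apply List.ext_getElem (by simp)
    intro i h1 h2
    simp only [List.getElem_ofFn]
    rw [List.getD_eq_getElem _ _ (by simp; omega), List.getElem_append_left (by simpa using h2)]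

lemma cylFun_epoint {u : List Bool} (hu : u ∈ OSet) (v : List Bool) :
    cylFun u (epoint v) = if u <+: v then 1 else 0 := by
  rw [cylFun_apply]
  simp only [trunc_epoint_eq_iff hu v]

lemma biorth {u v : List Bool} (hu : u ∈ OSet) (hv : v ∈ OSet) :
    coefF u (cylFun v) = if v = u then 1 else 0 := by
  unfold coefF
  rcases hu with rfl | ⟨s, rfl⟩
  · rw [if_pos rfl, cylFun_epoint hv]
    simp [List.prefix_nil]
  · rw [if_neg (by simp), List.dropLast_concat, cylFun_epoint hv, cylFun_epoint hv]
    by_cases h : v = s ++ [false]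
    · subst h
      have h1 : ¬ (s ++ [false] <+: s) := fun hc => by have := hc.length_le; simp at this
      simp [h1]
    · have h3 : v <+: s ++ [false] ↔ v <+: s := by
        constructor
        · intro hc
          have hl : v.length ≤ s.length + 1 := by simpa using hc.length_le
          have hne : v.length ≤ s.length := by
            rcases Nat.lt_or_ge v.length (s.length + 1) with h4 | h4
            · omega
            · exact absurd (hc.eq_of_length (by simp; omega)) h
          exact List.prefix_of_prefix_length_le hc (List.prefix_append _ _) hne
        · intro hc
          exact hc.trans (List.prefix_append _ _)
      simp [h3, h]

lemma epoint_self (u : List Bool) : trunc (epoint u) u.length = u := by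
  apply List.ext_getElem (by simp)
  intro i h1 h2
  simp only [trunc, List.getElem_ofFn]
  exact List.getD_eq_getElem u true h2

lemma norm_cylFun (u : List Bool) : ‖cylFun u‖ = 1 := by
  apply le_antisymm
  · apply ContinuousMap.norm_le _ zero_le_one |>.2
    intro σ
    rw [cylFun_apply]
    split <;> simp
  · have h1 : cylFun u (epoint u) = 1 := by
      rw [cylFun_apply, if_pos (epoint_self u)]
    calc (1:ℝ) = ‖cylFun u (epoint u)‖ := by rw [h1]; simp
    _ ≤ ‖cylFun u‖ := ContinuousMap.norm_coe_le_norm _ _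

lemma sum_eval (N : ℕ) (c : ℕ → ℝ) (f : ℕ → CantorC) (σ : CantorSet) :
    (∑ n ∈ Finset.range N, c n • f n) σ = ∑ n ∈ Finset.range N, c n * f n σ := by
  induction N with
  | zero => simp
  | succ N ih => rw [Finset.sum_range_succ, Finset.sum_range_succ, ← ih]; simp

lemma coefF_sum (u : List Bool) (N : ℕ) (c : ℕ → ℝ) (f : ℕ → CantorC) :
    coefF u (∑ n ∈ Finset.range N, c n • f n)
      = ∑ n ∈ Finset.range N, c n * coefF u (f n) := by
  unfold coefF
  split
  · rw [sum_eval]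
  · rw [sum_eval, sum_eval, ← Finset.sum_sub_distrib]
    congr 1
    funext n
    ring

lemma ptwise (y : CantorC) {ε : ℝ} (hε : 0 < ε) (σ : CantorSet) :
    ∃ L : ℕ, ∀ τ : CantorSet, (∀ i < L, τ i = σ i) → dist (y τ) (y σ) < ε := by
  have hopen : IsOpen (y ⁻¹' Metric.ball (y σ) ε) :=
    y.continuous.isOpen_preimage _ Metric.isOpen_ball
  have hmem : σ ∈ y ⁻¹' Metric.ball (y σ) ε := by
    simp [Metric.mem_ball, hε]
  obtain ⟨I, u, hIu, hsub⟩ := isOpen_pi_iff.mp hopen σ hmem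
  refine ⟨(I.sup id) + 1, fun τ hτ => ?_⟩
  have : τ ∈ (I : Set ℕ).pi u := by
    intro i hi
    have h1 : i ≤ I.sup id := Finset.le_sup (f := id) (by simpa using hi)
    rw [hτ i (by omega)]
    exact (hIu i (by simpa using hi)).2
  exact hsub this

lemma uniform_cont (y : CantorC) {ε : ℝ} (hε : 0 < ε) :
    ∃ L : ℕ, ∀ σ τ : CantorSet, (∀ i < L, σ i = τ i) → dist (y σ) (y τ) ≤ ε := by
  have h2 : (0:ℝ) < ε / 2 := by positivity
  choose Lf hLf using fun σ => ptwise y h2 σ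
  have hcylopen : ∀ σ : CantorSet, IsOpen {τ : CantorSet | ∀ i < Lf σ, τ i = σ i} := by
    intro σ
    have : {τ : CantorSet | ∀ i < Lf σ, τ i = σ i}
        = (↑(Finset.range (Lf σ)) : Set ℕ).pi (fun i => {σ i}) := by
      ext τ; simp [Set.mem_pi]
    rw [this]
    exact isOpen_set_pi (Finset.range (Lf σ)).finite_toSet (fun i _ => isOpen_discrete _)
  obtain ⟨F, hF⟩ := isCompact_univ.elim_finite_subcover
    (fun σ : CantorSet => {τ : CantorSet | ∀ i < Lf σ, τ i = σ i}) hcylopen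
    (fun σ _ => Set.mem_iUnion.mpr ⟨σ, fun i _ => rfl⟩)
  refine ⟨F.sup Lf, fun σ τ hστ => ?_⟩
  obtain ⟨σ', hσ'F, hσ'⟩ := by
    have := hF (Set.mem_univ σ)
    simpa using this
  have hτ : ∀ i < Lf σ', τ i = σ' i := by
    intro i hi
    have hiL : i < F.sup Lf := lt_of_lt_of_le hi (Finset.le_sup hσ'F)
    rw [← hστ i hiL]
    exact hσ' i hi
  calc dist (y σ) (y τ) ≤ dist (y σ) (y σ') + dist (y τ) (y σ') := dist_triangle_right _ _ _
  _ ≤ ε / 2 + ε / 2 := add_le_add (hLf σ' σ hσ').le (hLf σ' τ hτ).le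
  _ = ε := by ring

section Enum
variable {t : ℕ → List Bool} (ht : IsOEnum t)

include ht

lemma ht_len {m n : ℕ} (h : m ≤ n) : (t m).length ≤ (t n).length := by
  by_contra hc
  exact absurd (ht.2.2 n m (Or.inl (not_le.mp hc))) (not_lt.mpr h)

lemma ht_mem (n : ℕ) : t n ∈ OSet := ht.2.1 ▸ Set.mem_range_self n

lemma ht_surj {u : List Bool} (hu : u ∈ OSet) : ∃ n, t n = u := by
  rw [← ht.2.1] at hu; exact hu

lemma ht_zero : t 0 = [] := by
  obtain ⟨k, hk⟩ := ht_surj ht (Or.inl rfl)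
  by_contra hc
  have hlen : (t k).length < (t 0).length := by
    rw [hk]
    simpa [List.length_pos_iff] using hc
  have := ht.2.2 k 0 (Or.inl hlen)
  omega

/-- The key partial-sum formula. -/
lemma lemA (g : CantorC) (σ : CantorSet) :
    ∀ N : ℕ, 1 ≤ N →
    ∃ M : ℕ, (∃ n < N, t n = trunc σ M) ∧
      (∀ p n, n < N → σ p = false → t n = trunc σ (p + 1) → p < M) ∧
      (∑ n ∈ Finset.range N, coefF (t n) g * cylFun (t n) σ) = g (extC σ M) := by
  intro N
  induction N with
  | zero => intro h; exact absurd h (by norm_num)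
  | succ N ih =>
    intro _
    by_cases hN : 1 ≤ N
    case neg =>
      have hN0 : N = 0 := by omega
      subst hN0
      refine ⟨0, ⟨0, Nat.zero_lt_one, by rw [ht_zero ht]; rfl⟩, ?_, ?_⟩
      · intro p n hn hp htn
        interval_cases n
        have hlc := congrArg List.length htn
        rw [ht_zero ht] at hlc
        simp at hlc
      · rw [Finset.sum_range_one, ht_zero ht]
        have h1 : cylFun [] σ = 1 := by
          rw [cylFun_apply]; simp
        have h2 : epoint ([] : List Bool) = extC σ 0 := by
          funext i; simp [epoint, extC]
        rw [h1, coefF, if_pos rfl, h2]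
        ring
    case pos =>
      obtain ⟨M, ⟨n₀, hn₀, hw⟩, hlow, hsum⟩ := ih hN
      rw [Finset.sum_range_succ, hsum]
      by_cases hal : trunc σ (t N).length = t N
      · set L := (t N).length with hLdef
        have hML : M < L := by
          have h1 : (t n₀).length = M := by rw [hw]; simp
          have h2 : M ≤ L := h1 ▸ ht_len ht (Nat.le_of_lt hn₀)
          rcases h2.lt_or_eq with h | h
          · exact h
          · exfalso
            have heq : t n₀ = t N := by rw [hw, h, hal]
            exact absurd (ht.1 heq) (Nat.ne_of_lt hn₀)
        have hLpos : 1 ≤ L := by omega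
        have hgM : extC σ M = extC σ (L - 1) := by
          apply extC_congr (by omega)
          intro p hMp hpL
          by_contra hfalse
          have hp : σ p = false := by simpa using hfalse
          obtain ⟨m, hm⟩ := ht_surj ht (trunc_mem_OSet σ hp)
          have hmlen : (t m).length = p + 1 := by rw [hm]; simp
          have hmN : m < N := by
            apply ht.2.2
            left
            rw [hmlen]
            omega
          exact absurd (hlow p m hmN hp hm) (by omega)
        have hcyl : cylFun (t N) σ = 1 := by rw [cylFun_apply, if_pos hal]
        have hcoef : coefF (t N) g = g (extC σ L) - g (extC σ (L - 1)) := by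
          have hne : t N ≠ [] := by
            intro h
            rw [h] at hLdef
            simp only [List.length_nil] at hLdef
            omega
          rw [coefF, if_neg hne]
          have e1 : epoint (t N) = extC σ L := by rw [← hal, epoint_trunc]
          have e2 : (t N).dropLast = trunc σ (L - 1) := by
            conv_lhs => rw [← hal]
            rw [show L = (L - 1) + 1 by omega, dropLast_trunc_succ]
            congr 1
          rw [e1, e2, epoint_trunc]
        refine ⟨L, ⟨N, Nat.lt_succ_self N, ?_⟩, ?_, ?_⟩
        · rw [← hal]
        · intro p n hn hp htn
          have h1 : (t n).length = p + 1 := by rw [htn]; simp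
          have h2 : (t n).length ≤ L := ht_len ht (Nat.lt_succ_iff.mp hn)
          omega
        · rw [hgM, hcoef, hcyl]; ring
      · refine ⟨M, ⟨n₀, hn₀.trans (Nat.lt_succ_self N), hw⟩, ?_, ?_⟩
        · intro p n hn hp htn
          rcases Nat.lt_succ_iff_lt_or_eq.mp hn with h | rfl
          · exact hlow p n h hp htn
          · exfalso
            apply hal
            rw [htn]
            simp
        · have hcyl : cylFun (t N) σ = 0 := by rw [cylFun_apply, if_neg hal]
          rw [hcyl]; ring

end Enum

end CylAux
end
/-- **Claim.** If `(t_n)` is the enumeration of `𝒪` according to the bijection `h`,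
then `(f_{t_n})` is a normalized monotone Schauder basis of `C(2^ℕ)`. -/
theorem cylFun_enum_is_normalized_monotone_basis (t : ℕ → List Bool) (ht : IsOEnum t) :
    (∀ n : ℕ, ‖cylFun (t n)‖ = 1) ∧
    IsSchauderBasis (fun n => cylFun (t n)) ∧
    IsMonotoneSeq (fun n => cylFun (t n)) := by
  classical
  have hO : ∀ n, t n ∈ OSet := fun n => CylAux.ht_mem ht n
  -- coefficient extraction from finite sums
  have hcoef_sum : ∀ (a : ℕ → ℝ) (m n : ℕ), n < m →
      CylAux.coefF (t n) (∑ j ∈ Finset.range m, a j • cylFun (t j)) = a n := by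
    intro a m n hnm
    rw [CylAux.coefF_sum, Finset.sum_eq_single n]
    · rw [CylAux.biorth (hO n) (hO n), if_pos rfl]
      ring
    · intro j hj hjn
      rw [CylAux.biorth (hO n) (hO j), if_neg (fun h => hjn (ht.1 h)), mul_zero]
    · intro h
      exact absurd (Finset.mem_range.mpr hnm) h
  -- norm bound for partial sums of coefficient expansions
  have hbound : ∀ (g : CantorC) (k : ℕ),
      ‖∑ n ∈ Finset.range k, CylAux.coefF (t n) g • cylFun (t n)‖ ≤ ‖g‖ := by
    intro g k
    rcases Nat.eq_zero_or_pos k with rfl | hk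
    · simp
    apply (ContinuousMap.norm_le _ (norm_nonneg g)).2
    intro σ
    obtain ⟨M, -, -, hsum⟩ := CylAux.lemA ht g σ k hk
    rw [CylAux.sum_eval, hsum]
    exact ContinuousMap.norm_coe_le_norm g _
  refine ⟨fun n => CylAux.norm_cylFun _, ?_, ?_⟩
  · -- Schauder basis
    intro y
    refine ⟨fun n => CylAux.coefF (t n) y, ?_, ?_⟩
    · -- convergence of the expansion
      show Filter.Tendsto
        (fun m => ∑ n ∈ Finset.range m, CylAux.coefF (t n) y • cylFun (t n))
        Filter.atTop (𝓝 y)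
      rw [Metric.tendsto_atTop]
      intro ε hε
      obtain ⟨L, hL⟩ := CylAux.uniform_cont y (show (0:ℝ) < ε/2 by positivity)
      have hfin : Set.Finite (t ⁻¹' {u : List Bool | u.length ≤ L}) :=
        Set.Finite.preimage (Set.injOn_of_injective ht.1)
          (List.finite_length_le Bool L)
      obtain ⟨b, hb⟩ := hfin.bddAbove
      refine ⟨b + 1, fun m hm => ?_⟩
      have hm1 : 1 ≤ m := by omega
      have hdist : dist (∑ n ∈ Finset.range m, CylAux.coefF (t n) y • cylFun (t n)) y
          ≤ ε/2 := by
        rw [ContinuousMap.dist_le (by positivity)]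
        intro σ
        obtain ⟨M, -, hlow, hsum⟩ := CylAux.lemA ht y σ m hm1
        have heval : (∑ n ∈ Finset.range m, CylAux.coefF (t n) y • cylFun (t n)) σ
            = y (CylAux.extC σ M) := by
          rw [CylAux.sum_eval, hsum]
        rw [heval]
        apply hL
        intro i hi
        show (if i < M then σ i else true) = σ i
        by_cases hiM : i < M
        · rw [if_pos hiM]
        · rw [if_neg hiM]
          by_contra hne
          have hif : σ i = false := by
            cases hσ : σ i
            · rfl
            · exact absurd hσ.symm hne
          obtain ⟨n, hn⟩ := CylAux.ht_surj ht (CylAux.trunc_mem_OSet σ hif)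
          have hnlen : (t n).length = i + 1 := by rw [hn]; simp
          have hnm : n < m := by
            have hmem : n ∈ t ⁻¹' {u : List Bool | u.length ≤ L} := by
              simp only [Set.mem_preimage, Set.mem_setOf_eq, hnlen]
              omega
            have := hb hmem
            omega
          exact absurd (hlow i n hnm hif hn) hiM
      exact lt_of_le_of_lt hdist (by linarith)
    · -- uniqueness of coefficients
      intro c hc
      replace hc : Filter.Tendsto
          (fun m => ∑ n ∈ Finset.range m, c n • cylFun (t n))
          Filter.atTop (𝓝 y) := hc
      funext j
      have hcont : Continuous (fun g : CantorC => CylAux.coefF (t j) g) := by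
        unfold CylAux.coefF
        by_cases h : t j = []
        · simp only [if_pos h]
          exact continuous_eval_const _
        · simp only [if_neg h]
          exact (continuous_eval_const _).sub
            (continuous_eval_const _)
      have h1 : Filter.Tendsto
          (fun m => CylAux.coefF (t j) (∑ n ∈ Finset.range m, c n • cylFun (t n)))
          Filter.atTop (𝓝 (CylAux.coefF (t j) y)) := (hcont.tendsto y).comp hc
      have h2 : (fun m => CylAux.coefF (t j) (∑ n ∈ Finset.range m, c n • cylFun (t n)))
          =ᶠ[Filter.atTop] (fun _ => c j) := by
        filter_upwards [Filter.eventually_ge_atTop (j+1)] with m hm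
        exact hcoef_sum c m j (by omega)
      have h3 : Filter.Tendsto (fun _ : ℕ => c j) Filter.atTop
          (𝓝 (CylAux.coefF (t j) y)) := h1.congr' h2
      exact (tendsto_nhds_unique h3 tendsto_const_nhds).symm
  · -- monotone
    intro a k m hkm
    show ‖∑ n ∈ Finset.range k, a n • cylFun (t n)‖ ≤ ‖∑ n ∈ Finset.range m, a n • cylFun (t n)‖
    rcases Nat.eq_zero_or_pos k with rfl | hk
    · simp [norm_nonneg]
    have h1 : ∑ n ∈ Finset.range k, a n • cylFun (t n)
        = ∑ n ∈ Finset.range k, CylAux.coefF (t n)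
            (∑ j ∈ Finset.range m, a j • cylFun (t j)) • cylFun (t n) := by
      apply Finset.sum_congr rfl
      intro n hn
      rw [hcoef_sum a m n (lt_of_lt_of_le (Finset.mem_range.mp hn) hkm)]
    rw [h1]
    exact hbound _ k
end

section
/- Let B and X be Banach spaces, 0 < η ≤ 1, S a closed subspace of B, and u : S → X a bounded linear operator with ‖u‖ ≤ η. Let X₁, j and ũ be as in the canonical triple associated to (B, S, u, X, η). Then j is an isometric embedding, ‖ũ‖ ≤ 1, ũ(s) = j(u(s)) for every s ∈ S, and the quotient spaces B/S and X₁/j(X) are isometrically isomorphic. -/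
open Filter Topology MeasureTheory

noncomputable section

variable (B X : Type*) [NormedAddCommGroup B] [NormedSpace ℝ B]
  [NormedAddCommGroup X] [NormedSpace ℝ X]

/-- The subspace `N = {(s, -u(s)) : s ∈ S}` of `B ⊕₁ X` (where `B ⊕₁ X` is `B × X`
with the norm `‖(b,x)‖ = ‖b‖ + ‖x‖`). -/
def kislyakovKernel (S : Submodule ℝ B) (u : ↥S →L[ℝ] X) :
    Submodule ℝ (WithLp 1 (B × X)) :=
  Submodule.comap ((WithLp.linearEquiv 1 ℝ (B × X)).toLinearMap)
    (LinearMap.range (LinearMap.prod S.subtype (-(u : ↥S →ₗ[ℝ] X))))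

/-- The space `X₁ = (B ⊕₁ X)/N` of the canonical triple associated to `(B,S,u,X,η)`. -/
abbrev canonX1 (S : Submodule ℝ B) (u : ↥S →L[ℝ] X) : Type _ :=
  WithLp 1 (B × X) ⧸ kislyakovKernel B X S u

/-- The map `j : X → X₁`, `j(x) = Q((0,x))`, of the canonical triple. -/
def canonJ (S : Submodule ℝ B) (u : ↥S →L[ℝ] X) : X →ₗ[ℝ] canonX1 B X S u :=
  (kislyakovKernel B X S u).mkQ ∘ₗ
    ((WithLp.linearEquiv 1 ℝ (B × X)).symm.toLinearMap ∘ₗ LinearMap.inr ℝ B X)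

/-- The map `ũ : B → X₁`, `ũ(b) = Q((b,0))`, of the canonical triple. -/
def canonU (S : Submodule ℝ B) (u : ↥S →L[ℝ] X) : B →ₗ[ℝ] canonX1 B X S u :=
  (kislyakovKernel B X S u).mkQ ∘ₗ
    ((WithLp.linearEquiv 1 ℝ (B × X)).symm.toLinearMap ∘ₗ LinearMap.inl ℝ B X)

end

set_option linter.unusedSectionVars false

noncomputable section Aux

variable {B X : Type*} [NormedAddCommGroup B] [NormedSpace ℝ B]
  [NormedAddCommGroup X] [NormedSpace ℝ X]

/-- shorthand for elements of `B ⊕₁ X` -/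
def kp (b : B) (x : X) : WithLp 1 (B × X) := (WithLp.equiv 1 (B × X)).symm (b, x)

lemma kp_norm (b : B) (x : X) : ‖kp b x‖ = ‖b‖ + ‖x‖ := by
  rw [WithLp.prod_norm_eq_of_nat 1 (by norm_cast) _]
  simp [kp, WithLp.toLp_fst, WithLp.toLp_snd]

lemma kp_fst (b : B) (x : X) : (kp b x).fst = b := rfl
lemma kp_snd (b : B) (x : X) : (kp b x).snd = x := rfl

lemma kp_fst_snd (z : WithLp 1 (B × X)) : kp z.fst z.snd = z := rfl

lemma kp_sub (b b' : B) (x x' : X) : kp b x - kp b' x' = kp (b - b') (x - x') := rfl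

variable (S : Submodule ℝ B) (u : ↥S →L[ℝ] X)

lemma mem_kk (z : WithLp 1 (B × X)) :
    z ∈ kislyakovKernel B X S u ↔ ∃ s : ↥S, kp (s : B) (-(u s)) = z := by
  simp only [kislyakovKernel, Submodule.mem_comap, LinearMap.mem_range, LinearMap.prod_apply]
  constructor
  · rintro ⟨s, hs⟩
    exact ⟨s, congrArg (WithLp.equiv 1 (B × X)).symm hs⟩
  · rintro ⟨s, hs⟩
    exact ⟨s, congrArg (WithLp.equiv 1 (B × X)) hs⟩

lemma canonJ_eq (x : X) :
    canonJ B X S u x = Submodule.Quotient.mk (kp (0 : B) x) := rfl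

lemma canonU_eq (b : B) :
    canonU B X S u b = Submodule.Quotient.mk (kp b (0 : X)) := rfl

end Aux

/-- **Proposition (Kisliakov).** For the canonical triple `(X₁, j, ũ)` associated to
`(B, S, u, X, η)`: `j` is an isometric embedding, `‖ũ‖ ≤ 1`, `ũ(s) = j(u(s))` for
`s ∈ S`, and `B/S` and `X₁/j(X)` are isometrically isomorphic. -/
theorem canonical_triple_properties (B X : Type*) [NormedAddCommGroup B]
    [NormedSpace ℝ B] [NormedAddCommGroup X] [NormedSpace ℝ X]
    (S : Submodule ℝ B) (hS : IsClosed (S : Set B))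
    (η : ℝ) (hη0 : 0 < η) (hη1 : η ≤ 1)
    (u : ↥S →L[ℝ] X) (hu : ‖u‖ ≤ η) :
    (∀ v : X, ‖canonJ B X S u v‖ = ‖v‖) ∧
    (∀ b : B, ‖canonU B X S u b‖ ≤ ‖b‖) ∧
    (∀ s : ↥S, canonU B X S u (s : B) = canonJ B X S u (u s)) ∧
    Nonempty ((B ⧸ S) ≃ₗᵢ[ℝ]
      (canonX1 B X S u ⧸ LinearMap.range (canonJ B X S u))) := by
  have kp_add : ∀ (b b' : B) (x x' : X), kp b x + kp b' x' = kp (b + b') (x + x') :=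
    fun _ _ _ _ => rfl
  -- Part 3
  have h3 : ∀ s : ↥S, canonU B X S u (s : B) = canonJ B X S u (u s) := by
    intro s
    rw [canonU_eq, canonJ_eq, Submodule.Quotient.eq]
    refine (mem_kk S u _).2 ⟨s, ?_⟩
    rw [kp_sub]
    congr 1 <;> abel
  -- Part 2
  have h2 : ∀ b : B, ‖canonU B X S u b‖ ≤ ‖b‖ := by
    intro b
    rw [canonU_eq]
    calc ‖(Submodule.Quotient.mk (kp b (0 : X)) : canonX1 B X S u)‖ ≤ ‖kp b (0 : X)‖ :=
          Submodule.Quotient.norm_mk_le _ _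
      _ = ‖b‖ := by rw [kp_norm]; simp
  -- Part 1
  have h1 : ∀ v : X, ‖canonJ B X S u v‖ = ‖v‖ := by
    intro v
    refine le_antisymm ?_ ?_
    · rw [canonJ_eq]
      calc ‖(Submodule.Quotient.mk (kp (0 : B) v) : canonX1 B X S u)‖ ≤ ‖kp (0 : B) v‖ :=
            Submodule.Quotient.norm_mk_le _ _
        _ = ‖v‖ := by rw [kp_norm]; simp
    · refine le_of_forall_pos_le_add ?_
      intro ε hε
      obtain ⟨m, hm, hlt⟩ := Submodule.Quotient.norm_mk_lt (canonJ B X S u v) hε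
      have hmem : m - kp (0 : B) v ∈ kislyakovKernel B X S u :=
        (Submodule.Quotient.eq _).1 (hm.trans (canonJ_eq S u v))
      obtain ⟨s, hs⟩ := (mem_kk S u _).1 hmem
      have hm2 : m = kp (s : B) (-(u s) + v) := by
        have : kp (s : B) (-(u s)) + kp (0 : B) v = m := by
          rw [hs]; abel
        rw [← this, kp_add, add_zero]
      have hus : ‖u s‖ ≤ ‖(s : B)‖ := by
        have h' := u.le_opNorm s
        have h'' : ‖u‖ * ‖s‖ ≤ 1 * ‖s‖ :=
          mul_le_mul (hu.trans hη1) le_rfl (norm_nonneg s) zero_le_one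
        rw [one_mul] at h''
        exact h'.trans h''
      have hv : ‖v‖ ≤ ‖m‖ := by
        have : v = u s + (-(u s) + v) := by abel
        calc ‖v‖ = ‖u s + (-(u s) + v)‖ := by rw [← this]
          _ ≤ ‖u s‖ + ‖-(u s) + v‖ := norm_add_le _ _
          _ ≤ ‖(s : B)‖ + ‖-(u s) + v‖ := by linarith
          _ = ‖m‖ := by rw [hm2, kp_norm]
      linarith
  refine ⟨h1, h2, h3, ?_⟩
  -- Part 4
  set N := kislyakovKernel B X S u with hNdef
  set R := LinearMap.range (canonJ B X S u) with hRdef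
  have hker₁ : S ≤ LinearMap.ker (R.mkQ ∘ₗ canonU B X S u) := by
    intro b hb
    have : canonU B X S u b = canonJ B X S u (u ⟨b, hb⟩) := h3 ⟨b, hb⟩
    simp only [LinearMap.mem_ker, LinearMap.comp_apply, Submodule.mkQ_apply, this]
    rw [Submodule.Quotient.mk_eq_zero]
    exact ⟨u ⟨b, hb⟩, rfl⟩
  set f : (B ⧸ S) →ₗ[ℝ] (canonX1 B X S u ⧸ R) :=
    S.liftQ (R.mkQ ∘ₗ canonU B X S u) hker₁ with hfdef
  set g₀ : WithLp 1 (B × X) →ₗ[ℝ] (B ⧸ S) :=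
    S.mkQ ∘ₗ ((LinearMap.fst ℝ B X) ∘ₗ (WithLp.linearEquiv 1 ℝ (B × X)).toLinearMap)
    with hg₀def
  have hg₀ : ∀ z : WithLp 1 (B × X), g₀ z = Submodule.Quotient.mk z.fst := fun z => rfl
  have hkerN : N ≤ LinearMap.ker g₀ := by
    intro z hz
    obtain ⟨s, hs⟩ := (mem_kk S u z).1 hz
    simp only [LinearMap.mem_ker, ← hs, hg₀, kp_fst]
    rw [Submodule.Quotient.mk_eq_zero]
    exact s.2
  set g₁ : canonX1 B X S u →ₗ[ℝ] (B ⧸ S) := N.liftQ g₀ hkerN with hg₁def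
  have hkerR : R ≤ LinearMap.ker g₁ := by
    rintro z ⟨x, rfl⟩
    simp only [LinearMap.mem_ker, canonJ_eq, hg₁def]
    rw [Submodule.liftQ_apply, hg₀, kp_fst]
    exact (Submodule.Quotient.mk_eq_zero _).2 S.zero_mem
  set g : (canonX1 B X S u ⧸ R) →ₗ[ℝ] (B ⧸ S) := R.liftQ g₁ hkerR with hgdef
  have hgf : ∀ b : B, g (f (Submodule.Quotient.mk b)) = Submodule.Quotient.mk b :=
    fun b => rfl
  have hfg : ∀ z : canonX1 B X S u ⧸ R, f (g z) = z := by
    intro z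
    obtain ⟨z₁, rfl⟩ := Submodule.Quotient.mk_surjective R z
    obtain ⟨w, rfl⟩ := Submodule.Quotient.mk_surjective N z₁
    have : f (g (Submodule.Quotient.mk (Submodule.Quotient.mk w))) =
        Submodule.Quotient.mk (Submodule.Quotient.mk (kp w.fst (0 : X))) := rfl
    rw [this, Submodule.Quotient.eq]
    refine ⟨-w.snd, ?_⟩
    rw [canonJ_eq, ← Submodule.Quotient.mk_sub]
    congr 1
    show kp (0 : B) (-w.snd) = kp w.fst (0 : X) - kp w.fst w.snd
    rw [kp_sub]
    congr 1 <;> simp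
  set e : (B ⧸ S) ≃ₗ[ℝ] (canonX1 B X S u ⧸ R) :=
    LinearEquiv.ofLinear f g (LinearMap.ext hfg)
      (LinearMap.ext fun y => by
        obtain ⟨b, rfl⟩ := Submodule.Quotient.mk_surjective S y
        exact hgf b) with hedef
  have hf_le : ∀ y : B ⧸ S, ‖f y‖ ≤ ‖y‖ := by
    intro y
    refine le_of_forall_pos_le_add ?_
    intro ε hε
    obtain ⟨b, rfl, hb⟩ := Submodule.Quotient.norm_mk_lt y hε
    calc ‖f (Submodule.Quotient.mk b)‖
        = ‖(Submodule.Quotient.mk (Submodule.Quotient.mk (kp b (0 : X)) : canonX1 B X S u)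
            : canonX1 B X S u ⧸ R)‖ := rfl
      _ ≤ ‖(Submodule.Quotient.mk (kp b (0 : X)) : canonX1 B X S u)‖ :=
          Submodule.Quotient.norm_mk_le _ _
      _ ≤ ‖kp b (0 : X)‖ := Submodule.Quotient.norm_mk_le _ _
      _ = ‖b‖ := by rw [kp_norm]; simp
      _ ≤ _ := hb.le
  have hg_le : ∀ z : canonX1 B X S u ⧸ R, ‖g z‖ ≤ ‖z‖ := by
    intro z
    refine le_of_forall_pos_le_add ?_
    intro ε hε
    obtain ⟨z₁, rfl, hz₁⟩ := Submodule.Quotient.norm_mk_lt z (half_pos hε)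
    obtain ⟨w, rfl, hw⟩ := Submodule.Quotient.norm_mk_lt z₁ (half_pos hε)
    have : g (Submodule.Quotient.mk (Submodule.Quotient.mk w)) =
        Submodule.Quotient.mk w.fst := rfl
    rw [this]
    have h₁ : ‖(Submodule.Quotient.mk w.fst : B ⧸ S)‖ ≤ ‖w.fst‖ :=
      Submodule.Quotient.norm_mk_le _ _
    have h₂ : ‖w.fst‖ ≤ ‖w‖ := by
      have : ‖w‖ = ‖w.fst‖ + ‖w.snd‖ := by rw [← kp_norm w.fst w.snd]; rfl
      rw [this]
      have := norm_nonneg w.snd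
      linarith
    linarith
  refine ⟨⟨e, fun y => ?_⟩⟩
  refine le_antisymm (hf_le y) ?_
  have h' := hg_le (e y)
  have : g (e y) = y := by
    obtain ⟨b, rfl⟩ := Submodule.Quotient.mk_surjective S y
    exact hgf b
  rw [this] at h'
  exact h'
end

section
/- Let B and X be Banach spaces, 0 < η ≤ 1, S a closed subspace of B, and u : S → X a bounded linear operator with ‖u‖ ≤ η. Suppose there exists 0 < δ ≤ 1 such that ‖u(s)‖ ≥ δ‖s‖ for every s ∈ S. Then, for the canonical triple (X₁, j, ũ) associated to (B, S, u, X, η), we have ‖ũ(b)‖ ≥ δ‖b‖ for every b ∈ B. -/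
open Filter Topology MeasureTheory

/-- **Remark (Bourgain-Pisier).** If moreover `‖u(s)‖ ≥ δ‖s‖` for all `s ∈ S`
(for some `0 < δ ≤ 1`), then `‖ũ(b)‖ ≥ δ‖b‖` for every `b ∈ B`. -/
theorem canonical_triple_lower_bound (B X : Type*) [NormedAddCommGroup B]
    [NormedSpace ℝ B] [NormedAddCommGroup X] [NormedSpace ℝ X]
    (S : Submodule ℝ B) (hS : IsClosed (S : Set B))
    (η : ℝ) (hη0 : 0 < η) (hη1 : η ≤ 1)
    (u : ↥S →L[ℝ] X) (hu : ‖u‖ ≤ η)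
    (δ : ℝ) (hδ0 : 0 < δ) (hδ1 : δ ≤ 1)
    (hlow : ∀ s : ↥S, δ * ‖s‖ ≤ ‖u s‖) :
    ∀ b : B, δ * ‖b‖ ≤ ‖canonU B X S u b‖ := by
  intro b
  refine le_of_forall_pos_le_add fun ε hε => ?_
  obtain ⟨m, hm, hnorm⟩ := Submodule.Quotient.norm_mk_lt (canonU B X S u b) hε
  -- m : WithLp 1 (B × X), mk m = canonU b
  have hmem : m - (WithLp.linearEquiv 1 ℝ (B × X)).symm (b, 0) ∈ kislyakovKernel B X S u := by
    rw [← Submodule.Quotient.eq]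
    exact hm
  obtain ⟨s, hs⟩ := hmem
  -- hs : (s.1, -(u s)) = linearEquiv (m - ...)
  have hm1 : WithLp.equiv 1 (B × X) m = (b + s.1, -(u s)) := by
    simp only [map_sub, LinearMap.prod_apply, Pi.prod, LinearMap.neg_apply,
      Submodule.coe_subtype, WithLp.linearEquiv_apply, WithLp.linearEquiv_symm_apply,
      Equiv.apply_symm_apply, LinearEquiv.coe_coe] at hs
    rw [eq_sub_iff_add_eq] at hs
    rw [show WithLp.equiv 1 (B × X) m = (WithLp.addEquiv 1 (B × X)).toFun m from rfl, ← hs]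
    have hinv : (WithLp.addEquiv 1 (B × X)).toFun ((WithLp.addEquiv 1 (B × X)).invFun (b, 0))
        = (b, 0) := (WithLp.addEquiv 1 (B × X)).right_inv (b, 0)
    rw [hinv]
    simp [Prod.ext_iff, add_comm]
  have hnm : ‖m‖ = ‖b + s.1‖ + ‖u s‖ := by
    have heq := WithLp.prod_norm_eq_add (p := 1) (by norm_num) m
    have h1 : m.fst = b + s.1 := congrArg Prod.fst hm1
    have h2 : m.snd = -(u s) := congrArg Prod.snd hm1
    rw [heq, h1, h2, norm_neg]
    norm_num
  have key : δ * ‖b‖ ≤ ‖m‖ := by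
    rw [hnm]
    have h1 : δ * ‖b‖ ≤ δ * (‖b + s.1‖ + ‖s.1‖) := by
      have : ‖b‖ ≤ ‖b + s.1‖ + ‖s.1‖ := by
        calc ‖b‖ = ‖(b + s.1) - s.1‖ := by rw [add_sub_cancel_right]
          _ ≤ ‖b + s.1‖ + ‖s.1‖ := norm_sub_le _ _
      nlinarith
    have h2 : δ * ‖s.1‖ ≤ ‖u s‖ := by simpa using hlow s
    nlinarith [norm_nonneg (b + s.1)]
  calc δ * ‖b‖ ≤ ‖m‖ := key
    _ ≤ ‖canonU B X S u b‖ + ε := le_of_lt hnorm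
end
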